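/- arXiv:1611.00653 — 6 statements merged into one kernel-verified Lean document; each statement's English description precedes it below -/
import Mathlib

section
/- Let n ≥ 1, p ∈ (1,∞) with conjugate exponent q = p/(p−1), and let A be an n×n complex matrix belonging to 𝒜_{λ,Λ} for some 0 < λ ≤ Λ. Then Δ_p(A) = Δ_q(A), and moreover Δ_p(A) = (2/p²)·min{ H_{F_p}^A[1;ξ] : ξ ∈ ℂⁿ, |ξ| = 1 } = (2/p²)·min{ H_{F_p}^A[ζ;ξ] : ζ ∈ ℂ, |ζ| = 1, ξ ∈ ℂⁿ, |ξ| = 1 } (in particular F_p is twice real-Fréchet differentiable at every ζ ≠ 0, so these quantities are defined). -/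
open scoped BigOperators ComplexConjugate Matrix

noncomputable section

namespace Paper

/-- The sesquilinear pairing `⟨z,w⟩ = ∑ j, z j * conj (w j)` on `ℂⁿ`. -/
def herm {n : ℕ} (z w : Fin n → ℂ) : ℂ := ∑ j, z j * conj (w j)

/-- Euclidean norm of a complex vector, `|z| = √⟨z,z⟩`. -/
def cnorm {n : ℕ} (z : Fin n → ℂ) : ℝ := Real.sqrt (herm z z).re

/-- Componentwise complex conjugate of a vector. -/
def vconj {n : ℕ} (z : Fin n → ℂ) : Fin n → ℂ := fun j => conj (z j)

/-- The ℝ-linear map `𝒥_p(α + iβ) = α/p + iβ/q`, where `1/p + 1/q = 1`,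
i.e. `1/q = 1 - 1/p`. -/
def Jmap {n : ℕ} (p : ℝ) (ξ : Fin n → ℂ) : Fin n → ℂ :=
  fun j => (((ξ j).re / p : ℝ) : ℂ) + Complex.I * (((ξ j).im * (1 - 1 / p) : ℝ) : ℂ)

/-- `Δ_p(A) = 2 · min { Re⟨Aξ, 𝒥_p ξ⟩ : ξ ∈ ℂⁿ, |ξ| = 1 }`. -/
def Deltap {n : ℕ} (p : ℝ) (A : Matrix (Fin n) (Fin n) ℂ) : ℝ :=
  sInf {t : ℝ | ∃ ξ : Fin n → ℂ, cnorm ξ = 1 ∧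
    t = 2 * (herm (A.mulVec ξ) (Jmap p ξ)).re}

/-- `Δ_r(A) = min { Re⟨Aξ,ξ⟩ − |1 − 2/r|·|⟨Aξ,ξ̄⟩| : |ξ| = 1 }`, the extension of
`Δ_p` to all `r > 0`. -/
def DeltaGen {n : ℕ} (r : ℝ) (A : Matrix (Fin n) (Fin n) ℂ) : ℝ :=
  sInf {t : ℝ | ∃ ξ : Fin n → ℂ, cnorm ξ = 1 ∧
    t = (herm (A.mulVec ξ) ξ).re - |1 - 2 / r| * ‖herm (A.mulVec ξ) (vconj ξ)‖}

/-- Membership in the class `𝒜_{λ,Λ}`: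
`Re⟨Aξ,ξ⟩ ≥ λ|ξ|²` and `|⟨Aξ,η⟩| ≤ Λ|ξ||η|`. -/
def memA {n : ℕ} (lam Lam : ℝ) (A : Matrix (Fin n) (Fin n) ℂ) : Prop :=
  (∀ ξ : Fin n → ℂ, lam * cnorm ξ ^ 2 ≤ (herm (A.mulVec ξ) ξ).re) ∧
  (∀ ξ η : Fin n → ℂ, ‖herm (A.mulVec ξ) η‖ ≤ Lam * cnorm ξ * cnorm η)

/-- `λ_A = min { Re⟨Aξ,ξ⟩ : |ξ| = 1 }`. -/
def lamA {n : ℕ} (A : Matrix (Fin n) (Fin n) ℂ) : ℝ :=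
  sInf {t : ℝ | ∃ ξ : Fin n → ℂ, cnorm ξ = 1 ∧ t = (herm (A.mulVec ξ) ξ).re}

/-- `Λ_A = max { |⟨Aξ,η⟩| : |ξ| = |η| = 1 }`. -/
def LamA {n : ℕ} (A : Matrix (Fin n) (Fin n) ℂ) : ℝ :=
  sSup {t : ℝ | ∃ ξ η : Fin n → ℂ, cnorm ξ = 1 ∧ cnorm η = 1 ∧
    t = ‖herm (A.mulVec ξ) η‖}

/-- `μ(A) = inf { Re⟨Aξ,ξ⟩/|⟨Aξ,ξ̄⟩| : ⟨Aξ,ξ̄⟩ ≠ 0 }`. -/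
def muA {n : ℕ} (A : Matrix (Fin n) (Fin n) ℂ) : ℝ :=
  sInf {t : ℝ | ∃ ξ : Fin n → ℂ, herm (A.mulVec ξ) (vconj ξ) ≠ 0 ∧
    t = (herm (A.mulVec ξ) ξ).re / ‖herm (A.mulVec ξ) (vconj ξ)‖}

/-- Second real Fréchet derivative of `F : ℂ → ℝ` at `ζ`, as a bilinear expression. -/
def D2 (F : ℂ → ℝ) (ζ : ℂ) (ξ η : ℂ) : ℝ := fderiv ℝ (fderiv ℝ F) ζ ξ η

/-- `F : ℂ → ℝ` is twice real-Fréchet differentiable at `ζ`. -/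
def TwiceDiffAt (F : ℂ → ℝ) (ζ : ℂ) : Prop :=
  DifferentiableAt ℝ F ζ ∧ DifferentiableAt ℝ (fderiv ℝ F) ζ

/-- `H_F^A[ζ;ξ] = ∑ j, D²F(ζ)[ξ_j, (Aξ)_j]`. -/
def HFA {n : ℕ} (F : ℂ → ℝ) (A : Matrix (Fin n) (Fin n) ℂ) (ζ : ℂ) (ξ : Fin n → ℂ) : ℝ :=
  ∑ j, D2 F ζ (ξ j) (A.mulVec ξ j)

/-- The power function `F_r(ζ) = |ζ|^r`. -/
def Fpow (r : ℝ) (ζ : ℂ) : ℝ := ‖ζ‖ ^ r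

/-- Real dot product. -/
def rdot {n : ℕ} (u v : Fin n → ℝ) : ℝ := ∑ j, u j * v j

/-- Euclidean norm of a real vector. -/
def enorm {n : ℕ} (u : Fin n → ℝ) : ℝ := Real.sqrt (∑ j, u j ^ 2)

/-- Operator norm `‖M‖ = max { |Mu| : |u| = 1 }` of a real matrix. -/
def opnormR {n : ℕ} (M : Matrix (Fin n) (Fin n) ℝ) : ℝ :=
  sSup {t : ℝ | ∃ u : Fin n → ℝ, enorm u = 1 ∧ t = enorm (M.mulVec u)}

/-- Symmetric part `M_s = (M + Mᵀ)/2`. -/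
def symPart {n : ℕ} {R : Type*} [Field R] (M : Matrix (Fin n) (Fin n) R) :
    Matrix (Fin n) (Fin n) R := (2 : R)⁻¹ • (M + Mᵀ)

/-- Antisymmetric part `M_a = (M − Mᵀ)/2`. -/
def antiPart {n : ℕ} {R : Type*} [Field R] (M : Matrix (Fin n) (Fin n) R) :
    Matrix (Fin n) (Fin n) R := (2 : R)⁻¹ • (M - Mᵀ)

/-- `𝒱_p(V) = ((p−2)/(2√(p−1)))·V_s + (p/(2√(p−1)))·V_a`. -/
def Vmap {n : ℕ} (p : ℝ) (V : Matrix (Fin n) (Fin n) ℝ) : Matrix (Fin n) (Fin n) ℝ :=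
  ((p - 2) / (2 * Real.sqrt (p - 1))) • symPart V + (p / (2 * Real.sqrt (p - 1))) • antiPart V

/-- A real matrix is (symmetric) positive definite. -/
def RPosDef {n : ℕ} (M : Matrix (Fin n) (Fin n) ℝ) : Prop :=
  Mᵀ = M ∧ ∀ u : Fin n → ℝ, u ≠ 0 → 0 < rdot (M.mulVec u) u

/-- The complex matrix `U + iV` built from two real matrices. -/
def cplx {n : ℕ} (U V : Matrix (Fin n) (Fin n) ℝ) : Matrix (Fin n) (Fin n) ℂ :=
  Matrix.of fun i j => ((U i j : ℂ) + Complex.I * (V i j : ℂ))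

/-- `Φ : ℂ×ℂ → ℝ` is twice real-Fréchet differentiable at `v`. -/
def TwiceDiffAt2 (Φ : ℂ × ℂ → ℝ) (v : ℂ × ℂ) : Prop :=
  DifferentiableAt ℝ Φ v ∧ DifferentiableAt ℝ (fderiv ℝ Φ) v

/-- `H_Φ^{(A,B)}[v;ω] = ∑ j, D²Φ(v)[(ω₁ⱼ, ω₂ⱼ), ((Aω₁)ⱼ, (Bω₂)ⱼ)]`. -/
def HAB {n : ℕ} (Φ : ℂ × ℂ → ℝ) (A B : Matrix (Fin n) (Fin n) ℂ) (v : ℂ × ℂ)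
    (ω₁ ω₂ : Fin n → ℂ) : ℝ :=
  ∑ j, fderiv ℝ (fderiv ℝ Φ) v (ω₁ j, ω₂ j) (A.mulVec ω₁ j, B.mulVec ω₂ j)

/-- The Nazarov–Treil Bellman function `Q_{p,δ}` (with `q = p/(p−1)` passed explicitly). -/
def QNT (p q δ : ℝ) (ζ η : ℂ) : ℝ :=
  ‖ζ‖ ^ p + ‖η‖ ^ q +
    δ * (if ‖ζ‖ ^ p ≤ ‖η‖ ^ q
      then ‖ζ‖ ^ (2 : ℝ) * ‖η‖ ^ (2 - q)
      else (2 / p) * ‖ζ‖ ^ p + (2 / q - 1) * ‖η‖ ^ q)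

/-- `Δ_p` of a matrix-valued function on a subset `Ω ⊆ ℝᵐ`:
`2 · essinf_{x∈Ω} min_{|ξ|=1} Re⟨A(x)ξ, 𝒥_p ξ⟩`. -/
def DeltapAE {m n : ℕ} (p : ℝ) (A : (Fin m → ℝ) → Matrix (Fin n) (Fin n) ℂ)
    (Ω : Set (Fin m → ℝ)) : ℝ :=
  2 * essInf (fun x => sInf {t : ℝ | ∃ ξ : Fin n → ℂ, cnorm ξ = 1 ∧
      t = (herm ((A x).mulVec ξ) (Jmap p ξ)).re}) (MeasureTheory.volume.restrict Ω)

end Paper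

namespace Statement0Aux
open Complex

noncomputable def Bb : ℂ →L[ℝ] ℂ →L[ℝ] ℝ :=
  (ContinuousLinearMap.compL ℝ ℂ ℂ ℝ Complex.reCLM).comp
    ((ContinuousLinearMap.mul ℝ ℂ).comp (Complex.conjCLE.toContinuousLinearMap))

@[simp] lemma Bb_apply (ζ u : ℂ) : Bb ζ u = ((starRingEnd ℂ) ζ * u).re := rfl

lemma hasFDerivAt_normSq (ζ : ℂ) : HasFDerivAt Complex.normSq ((2:ℝ) • Bb ζ) ζ := by
  have h : HasFDerivAt (fun z : ℂ => z.re * z.re + z.im * z.im)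
      ((2:ℝ) • Bb ζ) ζ := by
    have hre : HasFDerivAt (fun z : ℂ => z.re) Complex.reCLM ζ :=
      Complex.reCLM.hasFDerivAt
    have him : HasFDerivAt (fun z : ℂ => z.im) Complex.imCLM ζ :=
      Complex.imCLM.hasFDerivAt
    have h2 : HasFDerivAt (fun z : ℂ => z.re * z.re + z.im * z.im)
        (ζ.re • Complex.reCLM + ζ.re • Complex.reCLM + (ζ.im • Complex.imCLM + ζ.im • Complex.imCLM)) ζ :=
      (hre.mul hre).add (him.mul him)
    convert h2 using 1
    ext u
    simp [Complex.mul_re]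
    ring
  have : (fun z : ℂ => z.re * z.re + z.im * z.im) = Complex.normSq := by
    funext z; simp [Complex.normSq_apply]
  rwa [this] at h

lemma Fpow_eq_rpow_normSq (p : ℝ) (z : ℂ) :
    Paper.Fpow p z = Complex.normSq z ^ (p/2) := by
  rw [Paper.Fpow, Complex.norm_def, Real.sqrt_eq_rpow,
    ← Real.rpow_mul (Complex.normSq_nonneg z)]
  ring_nf

lemma hasFDerivAt_Fpow (p : ℝ) {ζ : ℂ} (hζ : ζ ≠ 0) :
    HasFDerivAt (Paper.Fpow p) ((p * Complex.normSq ζ ^ (p/2 - 1)) • Bb ζ) ζ := by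
  have hs : Complex.normSq ζ ≠ 0 := by simpa using hζ
  have hrpow : HasDerivAt (fun s : ℝ => s ^ (p/2))
      ((p/2) * Complex.normSq ζ ^ (p/2 - 1)) (Complex.normSq ζ) :=
    Real.hasDerivAt_rpow_const (Or.inl hs)
  have h := hrpow.comp_hasFDerivAt ζ (hasFDerivAt_normSq ζ)
  have h2 : HasFDerivAt (Paper.Fpow p) ((p / 2 * Complex.normSq ζ ^ (p / 2 - 1)) • (2:ℝ) • Bb ζ) ζ := by
    refine h.congr_of_eventuallyEq (Filter.Eventually.of_forall fun z => ?_)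
    simp [Function.comp, Fpow_eq_rpow_normSq]
  convert h2 using 1
  rw [smul_smul]
  ring_nf

noncomputable def G (p : ℝ) (z : ℂ) : ℂ →L[ℝ] ℝ := (p * Complex.normSq z ^ (p/2 - 1)) • Bb z

lemma fderiv_Fpow_eventually (p : ℝ) {ζ : ℂ} (hζ : ζ ≠ 0) :
    fderiv ℝ (Paper.Fpow p) =ᶠ[nhds ζ] G p := by
  filter_upwards [compl_singleton_mem_nhds hζ] with z hz
  exact (hasFDerivAt_Fpow p hz).fderiv

lemma hasFDerivAt_G (p : ℝ) {ζ : ℂ} (hζ : ζ ≠ 0) :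
    HasFDerivAt (G p)
      ((p * Complex.normSq ζ ^ (p/2 - 1)) • Bb +
        ((p * (p-2) * Complex.normSq ζ ^ (p/2 - 2)) • Bb ζ).smulRight (Bb ζ)) ζ := by
  have hs : Complex.normSq ζ ≠ 0 := by simpa using hζ
  have hrpow : HasDerivAt (fun s : ℝ => s ^ (p/2 - 1))
      ((p/2 - 1) * Complex.normSq ζ ^ (p/2 - 1 - 1)) (Complex.normSq ζ) :=
    Real.hasDerivAt_rpow_const (Or.inl hs)
  have hc : HasFDerivAt (fun z : ℂ => p * Complex.normSq z ^ (p/2 - 1))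
      ((p * (p-2) * Complex.normSq ζ ^ (p/2 - 2)) • Bb ζ) ζ := by
    have h1 := (hrpow.comp_hasFDerivAt ζ (hasFDerivAt_normSq ζ)).const_smul p
    have heq : (fun x : ℂ => p • ((fun s : ℝ => s ^ (p/2 - 1)) ∘ Complex.normSq) x)
        = fun z : ℂ => p * Complex.normSq z ^ (p/2 - 1) := by
      funext z; simp [smul_eq_mul]
    have he2 : p/2 - 1 - 1 = p/2 - 2 := by ring
    rw [show (p • (fun s : ℝ => s ^ (p/2 - 1)) ∘ Complex.normSq) = fun z : ℂ => p * Complex.normSq z ^ (p/2 - 1) from heq, he2] at h1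
    have hD : p • ((p/2 - 1) * Complex.normSq ζ ^ (p/2 - 2)) • (2:ℝ) • Bb ζ
        = (p * (p-2) * Complex.normSq ζ ^ (p/2 - 2)) • Bb ζ := by
      rw [smul_smul, smul_smul]
      congr 1
      ring
    rwa [hD] at h1
  have hB : HasFDerivAt (fun z : ℂ => Bb z) Bb ζ := Bb.hasFDerivAt
  exact hc.smul hB

lemma D2_Fpow (p : ℝ) {ζ : ℂ} (hζ : ζ ≠ 0) (u v : ℂ) :
    Paper.D2 (Paper.Fpow p) ζ u v =
      p * Complex.normSq ζ ^ (p/2 - 1) * ((starRingEnd ℂ) u * v).re +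
      p * (p-2) * Complex.normSq ζ ^ (p/2 - 2) *
        ((starRingEnd ℂ) ζ * u).re * ((starRingEnd ℂ) ζ * v).re := by
  rw [Paper.D2, (fderiv_Fpow_eventually p hζ).fderiv_eq, (hasFDerivAt_G p hζ).fderiv]
  simp only [ContinuousLinearMap.add_apply, ContinuousLinearMap.coe_smul', Pi.smul_apply,
    ContinuousLinearMap.smulRight_apply, smul_eq_mul, Bb_apply]
  try ring

lemma twiceDiff (p : ℝ) {ζ : ℂ} (hζ : ζ ≠ 0) : Paper.TwiceDiffAt (Paper.Fpow p) ζ := by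
  refine ⟨(hasFDerivAt_Fpow p hζ).differentiableAt, ?_⟩
  exact (fderiv_Fpow_eventually p hζ).differentiableAt_iff.mpr
    (hasFDerivAt_G p hζ).differentiableAt

lemma herm_re {n : ℕ} (z w : Fin n → ℂ) :
    (Paper.herm z w).re = ∑ j, ((z j).re * (w j).re + (z j).im * (w j).im) := by
  rw [Paper.herm, Complex.re_sum]
  refine Finset.sum_congr rfl fun j _ => ?_
  simp [Complex.mul_re]
  try ring

lemma herm_self_re {n : ℕ} (z : Fin n → ℂ) :
    (Paper.herm z z).re = ∑ j, Complex.normSq (z j) := by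
  rw [Paper.herm, Complex.re_sum]
  refine Finset.sum_congr rfl fun j _ => ?_
  rw [Complex.mul_conj]
  simp

lemma cnorm_smul {n : ℕ} {c : ℂ} (hc : ‖c‖ = 1) (ξ : Fin n → ℂ) :
    Paper.cnorm (c • ξ) = Paper.cnorm ξ := by
  have hns : Complex.normSq c = 1 := by rw [Complex.normSq_eq_norm_sq, hc]; norm_num
  unfold Paper.cnorm
  rw [herm_self_re, herm_self_re]
  congr 1
  refine Finset.sum_congr rfl fun j _ => ?_
  simp [Complex.normSq_mul, hns]

lemma Jmap_re {n : ℕ} (r : ℝ) (ξ : Fin n → ℂ) (j : Fin n) :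
    (Paper.Jmap r ξ j).re = (ξ j).re / r := by
  simp [Paper.Jmap]

lemma Jmap_im {n : ℕ} (r : ℝ) (ξ : Fin n → ℂ) (j : Fin n) :
    (Paper.Jmap r ξ j).im = (ξ j).im * (1 - 1/r) := by
  simp [Paper.Jmap]

lemma fval_eq {n : ℕ} (r : ℝ) (A : Matrix (Fin n) (Fin n) ℂ) (ξ : Fin n → ℂ) :
    2 * (Paper.herm (A.mulVec ξ) (Paper.Jmap r ξ)).re
      = ∑ j, (2 * ((A.mulVec ξ j).re * (ξ j).re / r)
          + 2 * ((A.mulVec ξ j).im * ((ξ j).im * (1 - 1/r)))) := by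
  rw [herm_re, Finset.mul_sum]
  refine Finset.sum_congr rfl fun j _ => ?_
  rw [Jmap_re, Jmap_im]
  ring

lemma HFA_unit {n : ℕ} (p : ℝ) {ζ : ℂ} (hζ : ‖ζ‖ = 1)
    (A : Matrix (Fin n) (Fin n) ℂ) (ξ : Fin n → ℂ) :
    Paper.HFA (Paper.Fpow p) A ζ ξ = ∑ j,
      (p * ((starRingEnd ℂ) (ξ j) * (A.mulVec ξ j)).re
        + p * (p-2) * ((starRingEnd ℂ) ζ * ξ j).re * ((starRingEnd ℂ) ζ * A.mulVec ξ j).re) := by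
  have hζ0 : ζ ≠ 0 := by
    intro h; rw [h] at hζ; simp at hζ
  have hns : Complex.normSq ζ = 1 := by rw [Complex.normSq_eq_norm_sq, hζ]; norm_num
  unfold Paper.HFA
  refine Finset.sum_congr rfl fun j _ => ?_
  rw [D2_Fpow p hζ0, hns, Real.one_rpow, Real.one_rpow]
  ring

lemma K1 {n : ℕ} (p q : ℝ) (hp : 1 < p) (hq : q = p / (p - 1))
    (A : Matrix (Fin n) (Fin n) ℂ) (ξ : Fin n → ℂ) :
    2 * (Paper.herm (A.mulVec ξ) (Paper.Jmap q ξ)).re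
      = 2 * (Paper.herm (A.mulVec ((I:ℂ) • ξ)) (Paper.Jmap p ((I:ℂ) • ξ))).re := by
  have hp0 : p ≠ 0 := by intro h; rw [h] at hp; norm_num at hp
  have hp1 : p - 1 ≠ 0 := by intro h; rw [sub_eq_zero] at h; rw [← h] at hp; norm_num at hp
  rw [fval_eq, fval_eq, Matrix.mulVec_smul]
  refine Finset.sum_congr rfl fun j _ => ?_
  simp only [Pi.smul_apply, smul_eq_mul, Complex.mul_re, Complex.mul_im,
    Complex.I_re, Complex.I_im, hq]
  field_simp
  ring

lemma K2 {n : ℕ} (p q : ℝ) (hp : 1 < p) (hq : q = p / (p - 1))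
    (A : Matrix (Fin n) (Fin n) ℂ) (ξ : Fin n → ℂ) :
    2 * (Paper.herm (A.mulVec ξ) (Paper.Jmap q ξ)).re
      = (2/p^2) * Paper.HFA (Paper.Fpow p) A 1 ξ := by
  have hp0 : p ≠ 0 := by intro h; rw [h] at hp; norm_num at hp
  have hp1 : p - 1 ≠ 0 := by intro h; rw [sub_eq_zero] at h; rw [← h] at hp; norm_num at hp
  rw [fval_eq, HFA_unit p (by simp) A ξ, Finset.mul_sum]
  refine Finset.sum_congr rfl fun j _ => ?_
  simp only [map_one, one_mul, Complex.mul_re, Complex.conj_re, Complex.conj_im, hq]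
  field_simp
  ring

lemma K3 {n : ℕ} (p : ℝ) {ζ : ℂ} (hζ : ‖ζ‖ = 1)
    (A : Matrix (Fin n) (Fin n) ℂ) (ξ : Fin n → ℂ) :
    Paper.HFA (Paper.Fpow p) A ζ (ζ • ξ) = Paper.HFA (Paper.Fpow p) A 1 ξ := by
  have hns : Complex.normSq ζ = 1 := by rw [Complex.normSq_eq_norm_sq, hζ]; norm_num
  rw [HFA_unit p hζ, HFA_unit p (by simp), Matrix.mulVec_smul]
  refine Finset.sum_congr rfl fun j _ => ?_
  have h1 : (starRingEnd ℂ) ζ * ζ = 1 := by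
    rw [mul_comm, Complex.mul_conj, hns, Complex.ofReal_one]
  simp only [Pi.smul_apply, smul_eq_mul, map_mul, map_one, one_mul]
  have e1 : (starRingEnd ℂ) ζ * (starRingEnd ℂ) (ξ j) * (ζ * A.mulVec ξ j)
      = (starRingEnd ℂ) (ξ j) * A.mulVec ξ j * ((starRingEnd ℂ) ζ * ζ) := by ring
  have e2 : (starRingEnd ℂ) ζ * (ζ * ξ j) = ξ j * ((starRingEnd ℂ) ζ * ζ) := by ring
  have e3 : (starRingEnd ℂ) ζ * (ζ * A.mulVec ξ j)
      = A.mulVec ξ j * ((starRingEnd ℂ) ζ * ζ) := by ring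
  rw [e1, e2, e3, h1, mul_one, mul_one, mul_one]

end Statement0Aux

open scoped Pointwise

/-- `Δ_p(A) = Δ_q(A)` and both equal
`(2/p²)·min H_{F_p}^A[1;ξ] = (2/p²)·min H_{F_p}^A[ζ;ξ]`. -/
theorem statement0 (n : ℕ) (hn : 1 ≤ n) (p q lam Lam : ℝ) (hp : 1 < p)
    (hq : q = p / (p - 1)) (hlam : 0 < lam) (hLam : lam ≤ Lam)
    (A : Matrix (Fin n) (Fin n) ℂ) (hA : Paper.memA lam Lam A) :
    (∀ ζ : ℂ, ζ ≠ 0 → Paper.TwiceDiffAt (Paper.Fpow p) ζ) ∧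
    Paper.Deltap p A = Paper.Deltap q A ∧
    Paper.Deltap p A = (2 / p ^ 2) *
      sInf {t : ℝ | ∃ ξ : Fin n → ℂ, Paper.cnorm ξ = 1 ∧
        t = Paper.HFA (Paper.Fpow p) A 1 ξ} ∧
    Paper.Deltap p A = (2 / p ^ 2) *
      sInf {t : ℝ | ∃ (ζ : ℂ) (ξ : Fin n → ℂ), ‖ζ‖ = 1 ∧ Paper.cnorm ξ = 1 ∧
        t = Paper.HFA (Paper.Fpow p) A ζ ξ}  := by
  have hp0 : p ≠ 0 := by intro h; rw [h] at hp; norm_num at hp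
  have hset1 : {t : ℝ | ∃ ξ : Fin n → ℂ, Paper.cnorm ξ = 1 ∧
        t = 2 * (Paper.herm (A.mulVec ξ) (Paper.Jmap p ξ)).re}
      = {t : ℝ | ∃ ξ : Fin n → ℂ, Paper.cnorm ξ = 1 ∧
        t = 2 * (Paper.herm (A.mulVec ξ) (Paper.Jmap q ξ)).re} := by
    ext t
    simp only [Set.mem_setOf_eq]
    constructor
    · rintro ⟨ξ, h1, rfl⟩
      have hrec : (Complex.I : ℂ) • ((-Complex.I : ℂ) • ξ) = ξ := by
        rw [smul_smul]
        simp [Complex.I_mul_I]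
      refine ⟨(-Complex.I : ℂ) • ξ, ?_, ?_⟩
      · rw [Statement0Aux.cnorm_smul (by simp) ξ]; exact h1
      · rw [Statement0Aux.K1 p q hp hq A ((-Complex.I : ℂ) • ξ), hrec]
    · rintro ⟨ξ, h1, rfl⟩
      refine ⟨(Complex.I : ℂ) • ξ, ?_, ?_⟩
      · rw [Statement0Aux.cnorm_smul (by simp) ξ]; exact h1
      · exact Statement0Aux.K1 p q hp hq A ξ
  have hΔ : Paper.Deltap p A = Paper.Deltap q A := by
    unfold Paper.Deltap
    rw [hset1]
  have hset2 : {t : ℝ | ∃ ξ : Fin n → ℂ, Paper.cnorm ξ = 1 ∧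
        t = 2 * (Paper.herm (A.mulVec ξ) (Paper.Jmap q ξ)).re}
      = (2/p^2) • {t : ℝ | ∃ ξ : Fin n → ℂ, Paper.cnorm ξ = 1 ∧
        t = Paper.HFA (Paper.Fpow p) A 1 ξ} := by
    ext t
    simp only [Set.mem_setOf_eq, Set.mem_smul_set, smul_eq_mul]
    constructor
    · rintro ⟨ξ, h1, rfl⟩
      exact ⟨Paper.HFA (Paper.Fpow p) A 1 ξ, ⟨ξ, h1, rfl⟩,
        (Statement0Aux.K2 p q hp hq A ξ).symm⟩
    · rintro ⟨s, ⟨ξ, h1, rfl⟩, rfl⟩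
      exact ⟨ξ, h1, (Statement0Aux.K2 p q hp hq A ξ).symm⟩
  have h3 : Paper.Deltap p A = (2 / p ^ 2) *
      sInf {t : ℝ | ∃ ξ : Fin n → ℂ, Paper.cnorm ξ = 1 ∧
        t = Paper.HFA (Paper.Fpow p) A 1 ξ} := by
    rw [hΔ]
    unfold Paper.Deltap
    rw [hset2, Real.sInf_smul_of_nonneg (by positivity), smul_eq_mul]
  have hset3 : {t : ℝ | ∃ (ζ : ℂ) (ξ : Fin n → ℂ), ‖ζ‖ = 1 ∧ Paper.cnorm ξ = 1 ∧
        t = Paper.HFA (Paper.Fpow p) A ζ ξ}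
      = {t : ℝ | ∃ ξ : Fin n → ℂ, Paper.cnorm ξ = 1 ∧
        t = Paper.HFA (Paper.Fpow p) A 1 ξ} := by
    ext t
    simp only [Set.mem_setOf_eq]
    constructor
    · rintro ⟨ζ, ξ, hζ, h1, rfl⟩
      have hns : Complex.normSq ζ = 1 := by rw [Complex.normSq_eq_norm_sq, hζ]; norm_num
      have hrec : ζ • ((starRingEnd ℂ) ζ • ξ) = ξ := by
        rw [smul_smul, Complex.mul_conj, hns, Complex.ofReal_one, one_smul]
      refine ⟨(starRingEnd ℂ) ζ • ξ, ?_, ?_⟩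
      · rw [Statement0Aux.cnorm_smul (by simp [hζ]) ξ]; exact h1
      · rw [← Statement0Aux.K3 p hζ A ((starRingEnd ℂ) ζ • ξ), hrec]
    · rintro ⟨ξ, h1, rfl⟩
      exact ⟨1, ξ, by simp, h1, rfl⟩
  refine ⟨fun ζ hζ => Statement0Aux.twiceDiff p hζ, hΔ, h3, ?_⟩
  rw [hset3]
  exact h3
end
end

section
/- Let n ≥ 1, p ∈ (1,∞), and let A be an n×n complex matrix belonging to 𝒜_{λ,Λ} for some 0 < λ ≤ Λ. Then Δ_p(A) = min{ Re⟨Aξ,ξ⟩ − |1 − 2/p|·|⟨Aξ,ξ̄⟩| : ξ ∈ ℂⁿ, |ξ| = 1 }. -/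
open scoped BigOperators ComplexConjugate Matrix

noncomputable section

section AuxStatement1

lemma aux_herm_smul {n : ℕ} (c d : ℂ) (x y : Fin n → ℂ) :
    Paper.herm (c • x) (d • y) = c * conj d * Paper.herm x y := by
  simp only [Paper.herm, Pi.smul_apply, smul_eq_mul, map_mul, Finset.mul_sum]
  exact Finset.sum_congr rfl fun j _ => by ring

lemma aux_vconj_smul {n : ℕ} (c : ℂ) (x : Fin n → ℂ) :
    Paper.vconj (c • x) = conj c • Paper.vconj x := by
  funext j; simp [Paper.vconj, map_mul]

lemma aux_cnorm_vconj {n : ℕ} (x : Fin n → ℂ) : Paper.cnorm (Paper.vconj x) = Paper.cnorm x := by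
  unfold Paper.cnorm
  congr 1
  simp only [Paper.herm, Paper.vconj, Complex.conj_conj, Complex.re_sum]
  exact Finset.sum_congr rfl fun j _ => by rw [mul_comm]

lemma aux_mul_conj_one (c : ℂ) (hc : ‖c‖ = 1) : c * conj c = 1 := by
  rw [Complex.mul_conj]
  norm_cast
  rw [Complex.normSq_eq_norm_sq, hc]; norm_num

lemma aux_cnorm_smul {n : ℕ} (c : ℂ) (hc : ‖c‖ = 1) (x : Fin n → ℂ) :
    Paper.cnorm (c • x) = Paper.cnorm x := by
  unfold Paper.cnorm
  rw [aux_herm_smul, aux_mul_conj_one c hc, one_mul]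

lemma aux_herm_J {n : ℕ} (p : ℝ) (x ξ : Fin n → ℂ) :
    2 * (Paper.herm x (Paper.Jmap p ξ)).re
      = (Paper.herm x ξ).re + (2 / p - 1) * (Paper.herm x (Paper.vconj ξ)).re := by
  simp only [Paper.herm, Paper.Jmap, Paper.vconj, Complex.re_sum, Finset.mul_sum,
    ← Finset.sum_add_distrib]
  refine Finset.sum_congr rfl fun j _ => ?_
  simp only [map_add, map_mul, Complex.conj_ofReal, Complex.conj_I, Complex.conj_conj,
    Complex.mul_re, Complex.add_re, Complex.add_im, Complex.mul_im, Complex.conj_re,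
    Complex.conj_im, Complex.ofReal_re, Complex.ofReal_im, Complex.I_re, Complex.I_im,
    Complex.neg_re, Complex.neg_im]
  ring

lemma aux_sqrt_root (d : ℂ) (hd : ‖d‖ = 1) :
    ∃ c : ℂ, ‖c‖ = 1 ∧ c * c = d := by
  refine ⟨Complex.exp ((d.arg / 2 : ℝ) * Complex.I), Complex.norm_exp_ofReal_mul_I _, ?_⟩
  rw [← Complex.exp_add]
  have h2 : ((d.arg / 2 : ℝ) : ℂ) * Complex.I + ((d.arg / 2 : ℝ) : ℂ) * Complex.I
      = (d.arg : ℂ) * Complex.I := by push_cast; ring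
  rw [h2]
  have h3 := Complex.norm_mul_exp_arg_mul_I d
  rwa [hd, Complex.ofReal_one, one_mul] at h3

lemma aux_rot (r : ℝ) (h : ℂ) :
    ∃ c : ℂ, ‖c‖ = 1 ∧ r * (c * c * h).re = -(|r| * ‖h‖) := by
  by_cases h0 : h = 0
  · exact ⟨1, by simp, by simp [h0]⟩
  · set σ : ℝ := if 0 ≤ r then -1 else 1 with hσ
    have hab : ‖h‖ ≠ 0 := by simpa using h0
    have hσa : |σ| = 1 := by rw [hσ]; split <;> norm_num
    have hd1 : ‖((σ * ‖h‖ : ℝ) : ℂ) / h‖ = 1 := by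
      rw [norm_div, Complex.norm_real, Real.norm_eq_abs, abs_mul, hσa, one_mul,
        abs_of_nonneg (norm_nonneg h), div_self hab]
    obtain ⟨c, hc1, hc2⟩ := aux_sqrt_root _ hd1
    refine ⟨c, hc1, ?_⟩
    rw [hc2, div_mul_cancel₀ _ h0, Complex.ofReal_re]
    rcases le_or_gt 0 r with hr | hr
    · rw [hσ, if_pos hr, abs_of_nonneg hr]; ring
    · rw [hσ, if_neg (not_le.mpr hr), abs_of_neg hr]; ring

end AuxStatement1

/-- `Δ_p(A) = min { Re⟨Aξ,ξ⟩ − |1 − 2/p|·|⟨Aξ,ξ̄⟩| : |ξ| = 1 }`. -/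
theorem statement1 (n : ℕ) (hn : 1 ≤ n) (p lam Lam : ℝ) (hp : 1 < p)
    (hlam : 0 < lam) (hLam : lam ≤ Lam)
    (A : Matrix (Fin n) (Fin n) ℂ) (hA : Paper.memA lam Lam A) :
    Paper.Deltap p A = sInf {t : ℝ | ∃ ξ : Fin n → ℂ, Paper.cnorm ξ = 1 ∧
      t = (Paper.herm (A.mulVec ξ) ξ).re
        - |1 - 2 / p| * ‖Paper.herm (A.mulVec ξ) (Paper.vconj ξ)‖} := by
  obtain ⟨hA1, hA2⟩ := hA
  unfold Paper.Deltap
  have hcn1 : ∀ ξ : Fin n → ℂ, Paper.cnorm ξ = 1 →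
      lam ≤ (Paper.herm (A.mulVec ξ) ξ).re := by
    intro ξ hξ
    have := hA1 ξ
    rwa [hξ, one_pow, mul_one] at this
  have hcn2 : ∀ ξ : Fin n → ℂ, Paper.cnorm ξ = 1 →
      ‖Paper.herm (A.mulVec ξ) (Paper.vconj ξ)‖ ≤ Lam := by
    intro ξ hξ
    have := hA2 ξ (Paper.vconj ξ)
    rwa [hξ, aux_cnorm_vconj, hξ, mul_one, mul_one] at this
  have hne : ∃ ξ : Fin n → ℂ, Paper.cnorm ξ = 1 := by
    refine ⟨fun j => if j = ⟨0, hn⟩ then 1 else 0, ?_⟩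
    have h1 : Paper.herm (fun j => if j = (⟨0, hn⟩ : Fin n) then (1:ℂ) else 0)
        (fun j => if j = ⟨0, hn⟩ then 1 else 0) = 1 := by
      simp [Paper.herm, apply_ite (starRingEnd ℂ), ite_mul, mul_ite]
    rw [Paper.cnorm, h1]; simp
  obtain ⟨ξ₀, hξ₀⟩ := hne
  have hineq : ∀ ξ : Fin n → ℂ,
      -(|1 - 2 / p| * ‖Paper.herm (A.mulVec ξ) (Paper.vconj ξ)‖)
        ≤ (2 / p - 1) * (Paper.herm (A.mulVec ξ) (Paper.vconj ξ)).re := by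
    intro ξ
    have h1 : |(2 / p - 1) * (Paper.herm (A.mulVec ξ) (Paper.vconj ξ)).re|
        ≤ |1 - 2 / p| * ‖Paper.herm (A.mulVec ξ) (Paper.vconj ξ)‖ := by
      rw [abs_mul, abs_sub_comm (2 / p) 1]
      exact mul_le_mul_of_nonneg_left (Complex.abs_re_le_norm _) (abs_nonneg _)
    linarith [neg_abs_le ((2 / p - 1) * (Paper.herm (A.mulVec ξ) (Paper.vconj ξ)).re)]
  have habsLam : ∀ ξ : Fin n → ℂ, Paper.cnorm ξ = 1 →
      |1 - 2 / p| * ‖Paper.herm (A.mulVec ξ) (Paper.vconj ξ)‖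
        ≤ |1 - 2 / p| * Lam := fun ξ h =>
    mul_le_mul_of_nonneg_left (hcn2 ξ h) (abs_nonneg _)
  have bddS : BddBelow {t : ℝ | ∃ ξ : Fin n → ℂ, Paper.cnorm ξ = 1 ∧
      t = 2 * (Paper.herm (A.mulVec ξ) (Paper.Jmap p ξ)).re} := by
    refine ⟨lam - |1 - 2 / p| * Lam, ?_⟩
    rintro t ⟨ξ, hξ, rfl⟩
    rw [aux_herm_J]
    have := hcn1 ξ hξ
    have h2 := habsLam ξ hξ
    have h3 := hineq ξ
    linarith
  have bddT : BddBelow {t : ℝ | ∃ ξ : Fin n → ℂ, Paper.cnorm ξ = 1 ∧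
      t = (Paper.herm (A.mulVec ξ) ξ).re
        - |1 - 2 / p| * ‖Paper.herm (A.mulVec ξ) (Paper.vconj ξ)‖} := by
    refine ⟨lam - |1 - 2 / p| * Lam, ?_⟩
    rintro t ⟨ξ, hξ, rfl⟩
    have := hcn1 ξ hξ
    have h2 := habsLam ξ hξ
    linarith
  apply le_antisymm
  · refine le_csInf ⟨(Paper.herm (A.mulVec ξ₀) ξ₀).re
        - |1 - 2 / p| * ‖Paper.herm (A.mulVec ξ₀) (Paper.vconj ξ₀)‖, ξ₀, hξ₀, rfl⟩ ?_
    rintro t ⟨ξ, hξ, rfl⟩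
    obtain ⟨c, hc1, hc2⟩ := aux_rot (2 / p - 1) (Paper.herm (A.mulVec ξ) (Paper.vconj ξ))
    refine csInf_le bddS ⟨c • ξ, (aux_cnorm_smul c hc1 ξ).trans hξ, ?_⟩
    rw [aux_herm_J, Matrix.mulVec_smul, aux_vconj_smul, aux_herm_smul, aux_herm_smul,
      aux_mul_conj_one c hc1, one_mul, Complex.conj_conj]
    have habs : |1 - 2 / p| = |2 / p - 1| := abs_sub_comm _ _
    rw [habs]
    linarith [hc2]
  · refine le_csInf ⟨2 * (Paper.herm (A.mulVec ξ₀) (Paper.Jmap p ξ₀)).re, ξ₀, hξ₀, rfl⟩ ?_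
    rintro s ⟨ξ, hξ, rfl⟩
    refine le_trans (csInf_le bddT ⟨ξ, hξ, rfl⟩) ?_
    rw [aux_herm_J]
    linarith [hineq ξ]
end
end

section
/- Let r > 0, let A be an n×n complex matrix, let ζ ∈ ℂ∖{0} and ξ ∈ ℂⁿ. Then F_r is twice real-Fréchet differentiable at ζ and H_{F_r}^A[ζ;ξ] = (r²/2)·|ζ|^{r−2}·Re( ⟨Aξ,ξ⟩ + (1 − 2/r)·e^{−2i·arg ζ}·⟨Aξ,ξ̄⟩ ). -/
open scoped BigOperators ComplexConjugate Matrix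

noncomputable section

section St2Aux
open Complex

namespace St2Aux

def S (z : ℂ) : ℝ := z.re * z.re + z.im * z.im

lemma S_eq (z : ℂ) : S z = Complex.normSq z := (Complex.normSq_apply z).symm

lemma S_nonneg (z : ℂ) : 0 ≤ S z := add_nonneg (mul_self_nonneg _) (mul_self_nonneg _)

lemma S_pos {z : ℂ} (hz : z ≠ 0) : 0 < S z := by
  rw [S_eq]; exact Complex.normSq_pos.2 hz

noncomputable def LS (z : ℂ) : ℂ →L[ℝ] ℝ :=
  (2 * z.re) • Complex.reCLM + (2 * z.im) • Complex.imCLM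

lemma LS_apply (z w : ℂ) : LS z w = 2 * z.re * w.re + 2 * z.im * w.im := by
  simp [LS]

lemma hasFDerivAt_S (z : ℂ) : HasFDerivAt S (LS z) z := by
  have h1 : HasFDerivAt (fun w : ℂ => w.re) Complex.reCLM z := Complex.reCLM.hasFDerivAt
  have h2 : HasFDerivAt (fun w : ℂ => w.im) Complex.imCLM z := Complex.imCLM.hasFDerivAt
  have h := (h1.mul h1).add (h2.mul h2)
  refine h.congr_fderiv ?_
  apply ContinuousLinearMap.ext
  intro w
  simp [LS_apply]
  ring

lemma contDiff_S : ContDiff ℝ 2 S :=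
  (Complex.reCLM.contDiff.mul Complex.reCLM.contDiff).add
    (Complex.imCLM.contDiff.mul Complex.imCLM.contDiff)

variable (r : ℝ)

lemma Fpow_eq : Paper.Fpow r = fun z => S z ^ (r / 2) := by
  funext z
  rw [Paper.Fpow, Complex.norm_def, ← S_eq, Real.sqrt_eq_rpow,
    ← Real.rpow_mul (S_nonneg z)]
  congr 1
  ring

lemma hasFDerivAt_F {z : ℂ} (hz : z ≠ 0) :
    HasFDerivAt (Paper.Fpow r) (((r / 2) * S z ^ (r / 2 - 1)) • LS z) z := by
  rw [Fpow_eq]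
  exact (Real.hasDerivAt_rpow_const (p := r / 2)
    (Or.inl (S_pos hz).ne')).comp_hasFDerivAt z (hasFDerivAt_S z)

lemma contDiffAt_F {z : ℂ} (hz : z ≠ 0) : ContDiffAt ℝ 2 (Paper.Fpow r) z := by
  rw [Fpow_eq]
  exact (Real.contDiffAt_rpow_const_of_ne (S_pos hz).ne').comp z contDiff_S.contDiffAt

lemma D2_eq {ζ : ℂ} (hζ : ζ ≠ 0) (ξ η : ℂ) :
    Paper.D2 (Paper.Fpow r) ζ ξ η =
      r * (r - 2) * S ζ ^ (r / 2 - 2) *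
        ((ζ.re * ξ.re + ζ.im * ξ.im) * (ζ.re * η.re + ζ.im * η.im)) +
      r * S ζ ^ (r / 2 - 1) * (ξ.re * η.re + ξ.im * η.im) := by
  have hdiff : DifferentiableAt ℝ (fderiv ℝ (Paper.Fpow r)) ζ :=
    ((contDiffAt_F r hζ).fderiv_right (m := 1) (by norm_num)).differentiableAt (by norm_num)
  have happ : HasFDerivAt (fun z => fderiv ℝ (Paper.Fpow r) z η)
      ((ContinuousLinearMap.apply ℝ ℝ η).comp (fderiv ℝ (fderiv ℝ (Paper.Fpow r)) ζ)) ζ :=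
    (ContinuousLinearMap.apply ℝ ℝ η).hasFDerivAt.comp ζ hdiff.hasFDerivAt
  have h1 : fderiv ℝ (fun z => fderiv ℝ (Paper.Fpow r) z η) ζ ξ =
      Paper.D2 (Paper.Fpow r) ζ ξ η := by
    rw [happ.fderiv]; rfl
  rw [← h1]
  have hne : ∀ᶠ z in nhds ζ, z ≠ 0 := eventually_ne_nhds hζ
  have heq : (fun z => fderiv ℝ (Paper.Fpow r) z η) =ᶠ[nhds ζ]
      (fun z => ((r / 2) * S z ^ (r / 2 - 1)) *
        ((2 * η.re) * z.re + (2 * η.im) * z.im)) := by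
    filter_upwards [hne] with z hz
    rw [(hasFDerivAt_F r hz).fderiv]
    simp only [ContinuousLinearMap.smul_apply, LS_apply, smul_eq_mul]
    ring
  rw [heq.fderiv_eq]
  have hg1 : HasFDerivAt (fun z : ℂ => (r / 2) * S z ^ (r / 2 - 1))
      ((r / 2) • (((r / 2 - 1) * S ζ ^ (r / 2 - 1 - 1)) • LS ζ)) ζ :=
    ((Real.hasDerivAt_rpow_const (p := r / 2 - 1)
      (Or.inl (S_pos hζ).ne')).comp_hasFDerivAt ζ (hasFDerivAt_S ζ)).const_mul (r / 2)
  have hg2 : HasFDerivAt (fun z : ℂ => (2 * η.re) * z.re + (2 * η.im) * z.im)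
      ((2 * η.re) • Complex.reCLM + (2 * η.im) • Complex.imCLM) ζ :=
    (Complex.reCLM.hasFDerivAt.const_mul (2 * η.re)).add
      (Complex.imCLM.hasFDerivAt.const_mul (2 * η.im))
  rw [HasFDerivAt.fderiv (f := fun z : ℂ => (r / 2) * S z ^ (r / 2 - 1) *
    ((2 * η.re) * z.re + (2 * η.im) * z.im)) (hg1.mul hg2)]
  have h2 : r / 2 - 1 - 1 = r / 2 - 2 := by ring
  simp only [ContinuousLinearMap.add_apply, ContinuousLinearMap.smul_apply,
    Complex.reCLM_apply, Complex.imCLM_apply, LS_apply, smul_eq_mul, h2]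
  ring

end St2Aux
end St2Aux

/-- `H_{F_r}^A[ζ;ξ] = (r²/2)|ζ|^{r−2} Re(⟨Aξ,ξ⟩ + (1−2/r) e^{−2i·arg ζ} ⟨Aξ,ξ̄⟩)`. -/
theorem statement2 (n : ℕ) (r : ℝ) (hr : 0 < r) (A : Matrix (Fin n) (Fin n) ℂ)
    (ζ : ℂ) (hζ : ζ ≠ 0) (ξ : Fin n → ℂ) :
    Paper.TwiceDiffAt (Paper.Fpow r) ζ ∧
    Paper.HFA (Paper.Fpow r) A ζ ξ =
      (r ^ 2 / 2) * ‖ζ‖ ^ (r - 2) *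
        (Paper.herm (A.mulVec ξ) ξ
          + ((1 - 2 / r : ℝ) : ℂ) * Complex.exp (-2 * (ζ.arg : ℂ) * Complex.I)
            * Paper.herm (A.mulVec ξ) (Paper.vconj ξ)).re := by
  have hS0 : St2Aux.S ζ ≠ 0 := (St2Aux.S_pos hζ).ne'
  refine ⟨⟨(St2Aux.contDiffAt_F r hζ).differentiableAt (by norm_num),
      ((St2Aux.contDiffAt_F r hζ).fderiv_right (m := 1) (by norm_num)).differentiableAt (by norm_num)⟩, ?_⟩
  have hY : ∑ j, ((ξ j).re * (A.mulVec ξ j).re + (ξ j).im * (A.mulVec ξ j).im)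
      = (Paper.herm (A.mulVec ξ) ξ).re := by
    rw [Paper.herm, Complex.re_sum]
    exact Finset.sum_congr rfl fun j _ => by
      simp [Complex.mul_re]; ring
  have hX : (∑ j, ((ζ.re * (ξ j).re + ζ.im * (ξ j).im) *
        (ζ.re * (A.mulVec ξ j).re + ζ.im * (A.mulVec ξ j).im)))
      = 1/2 * ((starRingEnd ℂ) ζ ^ 2 * Paper.herm (A.mulVec ξ) (Paper.vconj ξ)).re
        + 1/2 * St2Aux.S ζ * (Paper.herm (A.mulVec ξ) ξ).re := by
    have hterm : ∀ j, (ζ.re * (ξ j).re + ζ.im * (ξ j).im) *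
          (ζ.re * (A.mulVec ξ j).re + ζ.im * (A.mulVec ξ j).im)
        = 1/2 * ((starRingEnd ℂ) ζ ^ 2 *
            (A.mulVec ξ j * (starRingEnd ℂ) (Paper.vconj ξ j))).re
          + 1/2 * St2Aux.S ζ * (A.mulVec ξ j * (starRingEnd ℂ) (ξ j)).re := fun j => by
      simp [Paper.vconj, Complex.mul_re, Complex.mul_im, St2Aux.S, pow_two]
      ring
    rw [Finset.sum_congr rfl fun j _ => hterm j, Finset.sum_add_distrib,
      ← Finset.mul_sum, ← Finset.mul_sum]
    congr 2
    · rw [Paper.herm, Finset.mul_sum, Complex.re_sum]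
    · rw [Paper.herm, Complex.re_sum]
  have hLHS : Paper.HFA (Paper.Fpow r) A ζ ξ =
      r * (r - 2) * St2Aux.S ζ ^ (r/2 - 2) *
        (1/2 * ((starRingEnd ℂ) ζ ^ 2 * Paper.herm (A.mulVec ξ) (Paper.vconj ξ)).re
          + 1/2 * St2Aux.S ζ * (Paper.herm (A.mulVec ξ) ξ).re)
      + r * St2Aux.S ζ ^ (r/2 - 1) * (Paper.herm (A.mulVec ξ) ξ).re := by
    rw [Paper.HFA, Finset.sum_congr rfl fun j _ => St2Aux.D2_eq r hζ (ξ j) (A.mulVec ξ j),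
      Finset.sum_add_distrib, ← Finset.mul_sum, ← Finset.mul_sum, hX, hY]
  -- identities for the right-hand side
  have habs : ‖ζ‖ ^ (r - 2) = St2Aux.S ζ ^ (r/2 - 1) := by
    rw [Complex.norm_def, ← St2Aux.S_eq, Real.sqrt_eq_rpow,
      ← Real.rpow_mul (St2Aux.S_nonneg ζ)]
    congr 1; ring
  have hc : (starRingEnd ℂ) ζ = (‖ζ‖ : ℂ) * Complex.exp (-((ζ.arg : ℂ) * Complex.I)) := by
    conv_lhs => rw [← Complex.norm_mul_exp_arg_mul_I ζ]
    rw [map_mul, Complex.conj_ofReal, ← Complex.exp_conj]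
    congr 1
    rw [map_mul, Complex.conj_ofReal, Complex.conj_I]
    ring
  have hE2 : (starRingEnd ℂ) ζ ^ 2 =
      (St2Aux.S ζ : ℂ) * Complex.exp (-2 * (ζ.arg : ℂ) * Complex.I) := by
    rw [hc, mul_pow, sq (Complex.exp _), ← Complex.exp_add]
    congr 1
    · rw [← Complex.ofReal_pow, St2Aux.S_eq, ← Complex.sq_norm]
    · congr 1; ring
  have hXW : ((starRingEnd ℂ) ζ ^ 2 * Paper.herm (A.mulVec ξ) (Paper.vconj ξ)).re
      = St2Aux.S ζ * (Complex.exp (-2 * (ζ.arg : ℂ) * Complex.I) *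
          Paper.herm (A.mulVec ξ) (Paper.vconj ξ)).re := by
    rw [hE2, mul_assoc, Complex.re_ofReal_mul]
  rw [hLHS, habs, Complex.add_re, mul_assoc (((1 - 2 / r : ℝ) : ℂ)),
    Complex.re_ofReal_mul, hXW]
  have e1 : St2Aux.S ζ ^ (r/2 - 2) = St2Aux.S ζ ^ (r/2 - 1) / St2Aux.S ζ := by
    rw [eq_div_iff hS0, ← Real.rpow_add_one hS0]
    congr 1; ring
  rw [e1]
  have hr0 : r ≠ 0 := hr.ne'
  field_simp
  ring
end
end

section
/- Let r > 0 and ζ ∈ ℂ∖{0}. Then F_r is twice real-Fréchet differentiable at ζ and, for all ξ, η ∈ ℂ, D²F_r(ζ)[ξ,η] = (r²/2)·|ζ|^{r−2}·( Re(ξ·conj(η)) + (1 − 2/r)·Re(e^{−2i·arg ζ}·ξ·η) ). -/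
open scoped BigOperators ComplexConjugate Matrix

noncomputable section

namespace Statement3Aux

noncomputable def innerR : ℂ →L[ℝ] ℂ →L[ℝ] ℝ := innerSL ℝ

lemma innerR_apply (z w : ℂ) : innerR z w = z.re * w.re + z.im * w.im := by
  have h : innerR z w = (w * starRingEnd ℂ z).re := Complex.inner z w
  rw [h]; simp [Complex.mul_re]; ring

noncomputable def f1 (r : ℝ) (z : ℂ) : ℂ →L[ℝ] ℝ :=
  (r * (‖z‖ ^ 2) ^ (r / 2 - 1)) • innerR z

lemma hF1 (r : ℝ) (z : ℂ) (hz : z ≠ 0) :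
    HasFDerivAt (fun z : ℂ => (‖z‖ ^ 2 : ℝ) ^ (r / 2)) (f1 r z) z := by
  have hn : HasFDerivAt (fun z : ℂ => ‖z‖ ^ 2) (2 • innerSL ℝ z) z :=
    (hasStrictFDerivAt_norm_sq z).hasFDerivAt
  have hs : (‖z‖ ^ 2 : ℝ) ≠ 0 := pow_ne_zero 2 (norm_ne_zero_iff.2 hz)
  have hr : HasDerivAt (fun t : ℝ => t ^ (r / 2)) ((r / 2) * (‖z‖ ^ 2) ^ (r / 2 - 1)) (‖z‖ ^ 2) :=
    Real.hasDerivAt_rpow_const (Or.inl hs)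
  have := hr.comp_hasFDerivAt z hn
  refine this.congr_fderiv ?_
  ext ξ
  simp [f1, smul_smul, innerR_apply]
  ring

lemma hD2 (r : ℝ) (ζ : ℂ) (hζ : ζ ≠ 0) :
    HasFDerivAt (f1 r)
      ((r * (‖ζ‖ ^ 2) ^ (r / 2 - 1)) • innerR +
        ((r * ((r / 2 - 1) * (‖ζ‖ ^ 2) ^ (r / 2 - 2))) • (2 • innerR ζ)).smulRight
          (innerR ζ)) ζ := by
  have hn : HasFDerivAt (fun z : ℂ => ‖z‖ ^ 2) (2 • innerR ζ) ζ :=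
    (hasStrictFDerivAt_norm_sq ζ).hasFDerivAt
  have hs : (‖ζ‖ ^ 2 : ℝ) ≠ 0 := pow_ne_zero 2 (norm_ne_zero_iff.2 hζ)
  have hr : HasDerivAt (fun t : ℝ => r * t ^ (r / 2 - 1))
      (r * ((r / 2 - 1) * (‖ζ‖ ^ 2) ^ (r / 2 - 1 - 1))) (‖ζ‖ ^ 2) :=
    (Real.hasDerivAt_rpow_const (Or.inl hs)).const_mul r
  rw [show r / 2 - 1 - 1 = r / 2 - 2 by ring] at hr
  have hc : HasFDerivAt (fun z : ℂ => r * (‖z‖ ^ 2) ^ (r / 2 - 1))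
      ((r * ((r / 2 - 1) * (‖ζ‖ ^ 2) ^ (r / 2 - 2))) • (2 • innerR ζ)) ζ :=
    HasDerivAt.comp_hasFDerivAt (h₂ := fun t : ℝ => r * t ^ (r / 2 - 1)) ζ hr hn
  have hL : HasFDerivAt (fun z : ℂ => innerR z) innerR ζ := innerR.hasFDerivAt
  exact hc.smul hL

lemma exp_neg_two_arg (ζ : ℂ) (hζ : ζ ≠ 0) :
    Complex.exp (-2 * (ζ.arg : ℂ) * Complex.I) =
      (starRingEnd ℂ ζ) ^ 2 / ((Complex.normSq ζ : ℝ) : ℂ) := by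
  have h := Complex.norm_mul_exp_arg_mul_I ζ
  have habs : (‖ζ‖ : ℂ) ≠ 0 := by
    simpa using (norm_ne_zero_iff.2 hζ)
  have hc1 : (‖ζ‖ : ℂ) * Complex.exp (-((ζ.arg : ℂ) * Complex.I)) =
      starRingEnd ℂ ζ := by
    have h' := congrArg (starRingEnd ℂ) h
    simp only [map_mul, ← Complex.exp_conj, Complex.conj_ofReal, Complex.conj_I, mul_neg] at h'
    rw [show -((ζ.arg : ℂ) * Complex.I) = (ζ.arg : ℂ) * -Complex.I by ring]
    simpa using h'
  have hexp : Complex.exp (-((ζ.arg : ℂ) * Complex.I)) =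
      starRingEnd ℂ ζ / (‖ζ‖ : ℂ) := by
    rw [eq_div_iff habs, mul_comm]; exact hc1
  have hs : ((Complex.normSq ζ : ℝ) : ℂ) ≠ 0 := by
    simpa using (Complex.normSq_pos.2 hζ).ne'
  rw [show (-2 * (ζ.arg : ℂ) * Complex.I) = -((ζ.arg : ℂ) * Complex.I) + -((ζ.arg : ℂ) * Complex.I)
    by ring, Complex.exp_add, hexp]
  have hns : ((Complex.normSq ζ : ℝ) : ℂ) = (‖ζ‖ : ℂ) * (‖ζ‖ : ℂ) := by
    rw [Complex.normSq_eq_norm_sq]; push_cast; ring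
  field_simp [hns]
  rw [hns]
  ring

end Statement3Aux

open Statement3Aux in
/-- the second derivative of the power function `F_r`:
`D²F_r(ζ)[ξ,η] = (r²/2)|ζ|^{r−2}(Re(ξ·conj η) + (1−2/r)·Re(e^{−2i·arg ζ}·ξ·η))`. -/
theorem statement3 (r : ℝ) (hr : 0 < r) (ζ : ℂ) (hζ : ζ ≠ 0) :
    Paper.TwiceDiffAt (Paper.Fpow r) ζ ∧
    ∀ ξ η : ℂ, Paper.D2 (Paper.Fpow r) ζ ξ η =
      (r ^ 2 / 2) * ‖ζ‖ ^ (r - 2) *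
        ((ξ * conj η).re
          + (1 - 2 / r) * (Complex.exp (-2 * (ζ.arg : ℂ) * Complex.I) * ξ * η).re) := by
  have hFeq : Paper.Fpow r = fun z : ℂ => (‖z‖ ^ 2 : ℝ) ^ (r / 2) := by
    funext z
    have h : ((‖z‖ ^ 2 : ℝ)) ^ (r / 2) = ‖z‖ ^ r := by
      rw [← Real.rpow_natCast (‖z‖) 2, ← Real.rpow_mul (norm_nonneg z)]
      congr 1
      push_cast; ring
    simp [Paper.Fpow, h]
  have hf1 : ∀ z : ℂ, z ≠ 0 → HasFDerivAt (Paper.Fpow r) (f1 r z) z := by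
    intro z hz; rw [hFeq]; exact hF1 r z hz
  have hnz : ∀ᶠ z in nhds ζ, z ≠ 0 := eventually_ne_nhds hζ
  have hev : fderiv ℝ (Paper.Fpow r) =ᶠ[nhds ζ] f1 r :=
    hnz.mono fun z hz => (hf1 z hz).fderiv
  have hD := hD2 r ζ hζ
  have h2nd : fderiv ℝ (fderiv ℝ (Paper.Fpow r)) ζ =
      (r * (‖ζ‖ ^ 2) ^ (r / 2 - 1)) • innerR +
        ((r * ((r / 2 - 1) * (‖ζ‖ ^ 2) ^ (r / 2 - 2))) • (2 • innerR ζ)).smulRight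
          (innerR ζ) := by
    rw [Filter.EventuallyEq.fderiv_eq hev]; exact hD.fderiv
  constructor
  · exact ⟨(hf1 ζ hζ).differentiableAt, hev.differentiableAt_iff.mpr hD.differentiableAt⟩
  intro ξ η
  rw [Paper.D2, h2nd, exp_neg_two_arg ζ hζ]
  simp only [ContinuousLinearMap.add_apply, ContinuousLinearMap.coe_smul', Pi.smul_apply,
    ContinuousLinearMap.smulRight_apply, ContinuousLinearMap.smul_apply, smul_eq_mul,
    innerR_apply]
  have hs0 : (0:ℝ) < Complex.normSq ζ := Complex.normSq_pos.2 hζ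
  have hnorm : (‖ζ‖ ^ 2 : ℝ) = Complex.normSq ζ := by
    rw [Complex.sq_norm]
  have habs2 : ‖ζ‖ ^ (r - 2) = Complex.normSq ζ ^ (r / 2 - 1) := by
    rw [← Complex.sq_norm, ← Real.rpow_natCast (‖ζ‖) 2,
      ← Real.rpow_mul (norm_nonneg ζ)]
    congr 1; push_cast; ring
  have hpow : Complex.normSq ζ ^ (r / 2 - 2 : ℝ)
      = Complex.normSq ζ ^ (r / 2 - 1 : ℝ) / Complex.normSq ζ := by
    rw [show (r/2-2 : ℝ) = (r/2-1) - 1 by ring, Real.rpow_sub hs0, Real.rpow_one]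
  have hre : ((starRingEnd ℂ ζ) ^ 2 / ((Complex.normSq ζ : ℝ) : ℂ) * ξ * η).re
      = ((starRingEnd ℂ ζ) ^ 2 * ξ * η).re / Complex.normSq ζ := by
    rw [div_mul_eq_mul_div, div_mul_eq_mul_div, Complex.div_ofReal_re]
  rw [hnorm, habs2, hpow, hre]
  have hsne : Complex.normSq ζ ≠ 0 := hs0.ne'
  simp only [smul_eq_mul, Complex.mul_re, Complex.mul_im, Complex.conj_re, Complex.conj_im,
    pow_two, Complex.normSq_apply] at *
  have hN : ζ.re ^ 2 + ζ.im ^ 2 ≠ 0 := by nlinarith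
  field_simp
  ring
end
end

section
/- Let r > 0, 0 < λ ≤ Λ, and let A be an n×n complex matrix belonging to 𝒜_{λ,Λ}. Then for every ζ ∈ ℂ∖{0} and every ξ ∈ ℂⁿ, H_{F_r}^A[ζ;ξ] ≥ (r²/2)·|ζ|^{r−2}·|ξ|²·Δ_r(A). -/
open scoped BigOperators ComplexConjugate Matrix

noncomputable section

section Aux
noncomputable section
open Complex

/-- `Mlin ζ v = ζ.re * v.re + ζ.im * v.im`, bundled linearly in `ζ`. -/
def Mlin : ℂ →L[ℝ] (ℂ →L[ℝ] ℝ) :=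
  Complex.reCLM.smulRight Complex.reCLM + Complex.imCLM.smulRight Complex.imCLM

@[simp] lemma Mlin_apply (z v : ℂ) : Mlin z v = z.re * v.re + z.im * v.im := by
  simp [Mlin, smul_eq_mul]

def gsq (z : ℂ) : ℝ := z.re ^ 2 + z.im ^ 2

lemma hasFDerivAt_gsq (z : ℂ) : HasFDerivAt gsq ((2:ℝ) • Mlin z) z := by
  have h1 : HasFDerivAt (fun w : ℂ => w.re * w.re + w.im * w.im)
      ((z.re • Complex.reCLM + z.re • Complex.reCLM) +
        (z.im • Complex.imCLM + z.im • Complex.imCLM)) z :=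
    (Complex.reCLM.hasFDerivAt.mul Complex.reCLM.hasFDerivAt).add
      (Complex.imCLM.hasFDerivAt.mul Complex.imCLM.hasFDerivAt)
  have h2 : ((z.re • Complex.reCLM + z.re • Complex.reCLM) +
        (z.im • Complex.imCLM + z.im • Complex.imCLM)) = (2:ℝ) • Mlin z := by
    ext v; simp [Mlin, smul_eq_mul]; ring
  have h3 : gsq = fun w : ℂ => w.re * w.re + w.im * w.im := by
    funext w; simp [gsq]; ring
  rw [h3]; exact h2 ▸ h1

lemma gsq_pos {z : ℂ} (hz : z ≠ 0) : 0 < gsq z := by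
  have : gsq z = Complex.normSq z := by simp [gsq, Complex.normSq_apply]; ring
  rw [this]; exact Complex.normSq_pos.2 hz

def F0 (r : ℝ) (z : ℂ) : ℝ := gsq z ^ (r / 2)

def dF0 (r : ℝ) (z : ℂ) : ℂ →L[ℝ] ℝ := (r * gsq z ^ (r / 2 - 1)) • Mlin z

lemma hasFDerivAt_F0 (r : ℝ) {z : ℂ} (hz : z ≠ 0) :
    HasFDerivAt (F0 r) (dF0 r z) z := by
  have h := (hasFDerivAt_gsq z).rpow_const (p := r / 2) (Or.inl (gsq_pos hz).ne')
  have : (r / 2 * gsq z ^ (r / 2 - 1)) • ((2:ℝ) • Mlin z) = dF0 r z := by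
    rw [smul_smul]; unfold dF0; ring_nf
  exact this ▸ h

lemma fderiv_F0 (r : ℝ) {z : ℂ} (hz : z ≠ 0) : fderiv ℝ (F0 r) z = dF0 r z :=
  (hasFDerivAt_F0 r hz).fderiv

lemma hasFDerivAt_dF0 (r : ℝ) {z : ℂ} (hz : z ≠ 0) :
    HasFDerivAt (dF0 r)
      ((r * gsq z ^ (r / 2 - 1)) • Mlin +
        ((r * (r / 2 - 1) * gsq z ^ (r / 2 - 2)) • ((2:ℝ) • Mlin z)).smulRight (Mlin z)) z := by
  have hc : HasFDerivAt (fun w : ℂ => r * gsq w ^ (r / 2 - 1))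
      ((r * ((r / 2 - 1) * gsq z ^ (r / 2 - 1 - 1))) • ((2:ℝ) • Mlin z)) z := by
    have := ((hasFDerivAt_gsq z).rpow_const (p := r / 2 - 1)
      (Or.inl (gsq_pos hz).ne')).const_mul r
    simpa [smul_smul, mul_assoc] using this
  have hf : HasFDerivAt (fun w : ℂ => Mlin w) Mlin z := Mlin.hasFDerivAt
  have h := hc.smul hf
  have e1 : r * ((r / 2 - 1) * gsq z ^ (r / 2 - 1 - 1)) = r * (r / 2 - 1) * gsq z ^ (r / 2 - 2) := by
    ring_nf
  rw [e1] at h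
  exact h

lemma fderiv_fderiv_F0 (r : ℝ) {z : ℂ} (hz : z ≠ 0) :
    fderiv ℝ (fderiv ℝ (F0 r)) z =
      (r * gsq z ^ (r / 2 - 1)) • Mlin +
        ((r * (r / 2 - 1) * gsq z ^ (r / 2 - 2)) • ((2:ℝ) • Mlin z)).smulRight (Mlin z) := by
  have hev : fderiv ℝ (F0 r) =ᶠ[nhds z] dF0 r := by
    filter_upwards [IsOpen.mem_nhds isOpen_compl_singleton hz] with w hw
    exact fderiv_F0 r hw
  rw [hev.fderiv_eq]
  exact (hasFDerivAt_dF0 r hz).fderiv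

lemma gsq_eq (z : ℂ) : gsq z = ‖z‖ ^ (2:ℝ) := by
  rw [show ((2:ℝ)) = ((2:ℕ):ℝ) by norm_num, Real.rpow_natCast, Complex.sq_norm]
  simp [gsq, Complex.normSq_apply]; ring

lemma gsq_rpow (z : ℂ) (s : ℝ) : gsq z ^ s = ‖z‖ ^ (2 * s) := by
  rw [gsq_eq, ← Real.rpow_mul (norm_nonneg z)]

lemma Fpow_eq_F0 (r : ℝ) : Paper.Fpow r = F0 r := by
  funext z
  rw [Paper.Fpow, F0, gsq_rpow]
  ring_nf

lemma D2_Fpow (r : ℝ) {z : ℂ} (hz : z ≠ 0) (u v : ℂ) :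
    Paper.D2 (Paper.Fpow r) z u v =
      r * (r - 2) * ‖z‖ ^ (r - 4) *
          ((z.re * u.re + z.im * u.im) * (z.re * v.re + z.im * v.im))
        + r * ‖z‖ ^ (r - 2) * (u.re * v.re + u.im * v.im) := by
  rw [Paper.D2, Fpow_eq_F0, fderiv_fderiv_F0 r hz]
  have e1 : gsq z ^ (r / 2 - 1) = ‖z‖ ^ (r - 2) := by
    rw [gsq_rpow]; ring_nf
  have e2 : gsq z ^ (r / 2 - 2) = ‖z‖ ^ (r - 4) := by
    rw [gsq_rpow]; ring_nf
  simp [ContinuousLinearMap.smul_apply, ContinuousLinearMap.smulRight_apply,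
    smul_eq_mul, e1, e2]
  ring

namespace Paper

lemma herm_self_re {n : ℕ} (z : Fin n → ℂ) :
    (herm z z).re = ∑ j, Complex.normSq (z j) := by
  rw [herm, Complex.re_sum]
  exact Finset.sum_congr rfl fun j _ => by rw [Complex.mul_conj]; simp

lemma herm_self_re_nonneg {n : ℕ} (z : Fin n → ℂ) : 0 ≤ (herm z z).re := by
  rw [herm_self_re]; exact Finset.sum_nonneg fun j _ => Complex.normSq_nonneg _

lemma cnorm_sq {n : ℕ} (z : Fin n → ℂ) : cnorm z ^ 2 = (herm z z).re := by
  rw [cnorm, Real.sq_sqrt (herm_self_re_nonneg z)]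

lemma cnorm_nonneg {n : ℕ} (z : Fin n → ℂ) : 0 ≤ cnorm z := Real.sqrt_nonneg _

lemma eq_zero_of_cnorm_eq_zero {n : ℕ} {z : Fin n → ℂ} (h : cnorm z = 0) : z = 0 := by
  have h2 : (herm z z).re = 0 := by
    have := cnorm_sq z; rw [h] at this; simpa using this.symm
  rw [herm_self_re] at h2
  funext j
  have := (Finset.sum_eq_zero_iff_of_nonneg
    (fun i _ => Complex.normSq_nonneg (z i))).1 h2 j (Finset.mem_univ j)
  exact Complex.normSq_eq_zero.1 this

lemma herm_smul_left {n : ℕ} (s : ℂ) (z w : Fin n → ℂ) :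
    herm (s • z) w = s * herm z w := by
  simp [herm, Finset.mul_sum, mul_assoc]

lemma herm_smul_right {n : ℕ} (s : ℂ) (z w : Fin n → ℂ) :
    herm z (s • w) = (starRingEnd ℂ) s * herm z w := by
  simp [herm, Finset.mul_sum]; exact Finset.sum_congr rfl fun j _ => by ring

lemma cnorm_smul_real {n : ℕ} (s : ℝ) (hs : 0 ≤ s) (z : Fin n → ℂ) :
    cnorm ((s : ℂ) • z) = s * cnorm z := by
  rw [cnorm, herm_smul_left, herm_smul_right, cnorm]
  have : ((s:ℂ) * ((starRingEnd ℂ) (s:ℂ) * herm z z)).re = s ^ 2 * (herm z z).re := by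
    simp [Complex.mul_re, Complex.mul_im]; ring
  rw [this, Real.sqrt_mul (by positivity), Real.sqrt_sq hs]

lemma cnorm_vconj {n : ℕ} (z : Fin n → ℂ) : cnorm (vconj z) = cnorm z := by
  rw [cnorm, cnorm, herm_self_re, herm_self_re]
  exact congrArg _ (Finset.sum_congr rfl fun j _ => by simp [vconj])

end Paper

namespace Paper

lemma deltaGen_le {n : ℕ} {r lam Lam : ℝ} (hr : 0 < r) (hlam : 0 < lam)
    {A : Matrix (Fin n) (Fin n) ℂ} (hA : memA lam Lam A) (ξ : Fin n → ℂ) :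
    cnorm ξ ^ 2 * DeltaGen r A ≤
      (herm (A.mulVec ξ) ξ).re - |1 - 2 / r| * ‖herm (A.mulVec ξ) (vconj ξ)‖ := by
  have hbdd : BddBelow {t : ℝ | ∃ ξ : Fin n → ℂ, cnorm ξ = 1 ∧
      t = (herm (A.mulVec ξ) ξ).re - |1 - 2 / r| * ‖herm (A.mulVec ξ) (vconj ξ)‖} := by
    refine ⟨lam - |1 - 2 / r| * Lam, ?_⟩
    rintro t ⟨ξ₀, h1, rfl⟩
    have e1 := hA.1 ξ₀
    rw [h1, one_pow, mul_one] at e1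
    have e2 := hA.2 ξ₀ (vconj ξ₀)
    rw [h1, cnorm_vconj, h1, mul_one, mul_one] at e2
    have e3 : |1 - 2 / r| * ‖herm (A.mulVec ξ₀) (vconj ξ₀)‖ ≤ |1 - 2 / r| * Lam :=
      mul_le_mul_of_nonneg_left e2 (abs_nonneg _)
    linarith
  by_cases hc : cnorm ξ = 0
  · have hz : ξ = 0 := eq_zero_of_cnorm_eq_zero hc
    subst hz
    simp [hc, herm, Matrix.mulVec_zero]
  · have hcpos : 0 < cnorm ξ := lt_of_le_of_ne (cnorm_nonneg ξ) (Ne.symm hc)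
    set c : ℝ := cnorm ξ with hcdef
    set ξ' : Fin n → ℂ := ((c⁻¹ : ℝ) : ℂ) • ξ with hξ'
    have h1 : cnorm ξ' = 1 := by
      rw [hξ', cnorm_smul_real _ (inv_nonneg.2 hcpos.le), inv_mul_cancel₀ hc]
    have hAv : A.mulVec ξ' = ((c⁻¹ : ℝ) : ℂ) • A.mulVec ξ := Matrix.mulVec_smul A _ ξ
    have hvc : vconj ξ' = ((c⁻¹ : ℝ) : ℂ) • vconj ξ := by
      funext j; simp [vconj, hξ', Complex.conj_ofReal]
    have key1 : (herm (A.mulVec ξ') ξ').re = c⁻¹ ^ 2 * (herm (A.mulVec ξ) ξ).re := by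
      rw [hAv, hξ', herm_smul_left, herm_smul_right, Complex.conj_ofReal]
      simp [Complex.mul_re, Complex.mul_im]; ring
    have key2 : ‖herm (A.mulVec ξ') (vconj ξ')‖ =
        c⁻¹ ^ 2 * ‖herm (A.mulVec ξ) (vconj ξ)‖ := by
      rw [hAv, hvc, herm_smul_left, herm_smul_right, Complex.conj_ofReal, norm_mul, norm_mul,
        Complex.norm_real, Real.norm_of_nonneg (inv_nonneg.2 hcpos.le)]
      ring
    have hmem : (herm (A.mulVec ξ') ξ').re -
        |1 - 2 / r| * ‖herm (A.mulVec ξ') (vconj ξ')‖ ∈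
        {t : ℝ | ∃ ξ : Fin n → ℂ, cnorm ξ = 1 ∧
          t = (herm (A.mulVec ξ) ξ).re - |1 - 2 / r| * ‖herm (A.mulVec ξ) (vconj ξ)‖} :=
      ⟨ξ', h1, rfl⟩
    have hle := csInf_le hbdd hmem
    rw [DeltaGen]
    rw [key1, key2] at hle
    have hle2 := mul_le_mul_of_nonneg_left hle (le_of_lt (by positivity : (0:ℝ) < c ^ 2))
    calc c ^ 2 * sInf _ ≤ c ^ 2 * (c⁻¹ ^ 2 * (herm (A.mulVec ξ) ξ).re -
          |1 - 2 / r| * (c⁻¹ ^ 2 * ‖herm (A.mulVec ξ) (vconj ξ)‖)) := hle2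
      _ = (herm (A.mulVec ξ) ξ).re -
          |1 - 2 / r| * ‖herm (A.mulVec ξ) (vconj ξ)‖ := by
          field_simp

end Paper

end
end Aux
/-- `H_{F_r}^A[ζ;ξ] ≥ (r²/2)|ζ|^{r−2}|ξ|²·Δ_r(A)`. -/
theorem statement4 (n : ℕ) (r lam Lam : ℝ) (hr : 0 < r)
    (hlam : 0 < lam) (hLam : lam ≤ Lam)
    (A : Matrix (Fin n) (Fin n) ℂ) (hA : Paper.memA lam Lam A)
    (ζ : ℂ) (hζ : ζ ≠ 0) (ξ : Fin n → ℂ) :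
    (r ^ 2 / 2) * ‖ζ‖ ^ (r - 2) * Paper.cnorm ξ ^ 2 * Paper.DeltaGen r A
      ≤ Paper.HFA (Paper.Fpow r) A ζ ξ := by
  classical
  set a : ℝ := ‖ζ‖ with hadef
  have ha : 0 < a := norm_pos_iff.mpr hζ
  set S : ℝ := (Paper.herm (A.mulVec ξ) ξ).re with hS
  set B : ℂ := Paper.herm (A.mulVec ξ) (Paper.vconj ξ) with hB
  set W : ℝ := ((starRingEnd ℂ) ζ ^ 2 * B).re with hW
  set T : ℝ := ∑ j, (ζ.re * (ξ j).re + ζ.im * (ξ j).im) *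
      (ζ.re * (A.mulVec ξ j).re + ζ.im * (A.mulVec ξ j).im) with hTdef
  -- Step 1: Hessian formula
  have hHFA : Paper.HFA (Paper.Fpow r) A ζ ξ =
      r * (r - 2) * a ^ (r - 4) * T + r * a ^ (r - 2) * S := by
    have hS2 : (∑ j, ((ξ j).re * (A.mulVec ξ j).re + (ξ j).im * (A.mulVec ξ j).im)) = S := by
      rw [hS, Paper.herm, Complex.re_sum]
      exact Finset.sum_congr rfl fun j _ => by simp [Complex.mul_re]; ring
    rw [Paper.HFA,
      Finset.sum_congr rfl (fun j _ => D2_Fpow r hζ (ξ j) (A.mulVec ξ j)),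
      Finset.sum_add_distrib, ← Finset.mul_sum, ← Finset.mul_sum, hS2, ← hTdef]
  -- Step 2: the cross term
  have hT : T = 1 / 2 * (W + Complex.normSq ζ * S) := by
    have hBe : B = ∑ j, A.mulVec ξ j * ξ j := by
      rw [hB, Paper.herm]
      exact Finset.sum_congr rfl fun j _ => by simp [Paper.vconj]
    have hSe : S = ∑ j, (A.mulVec ξ j * (starRingEnd ℂ) (ξ j)).re := by
      rw [hS, Paper.herm, Complex.re_sum]
    rw [hTdef, hW, hBe, hSe, Finset.mul_sum, Complex.re_sum, Finset.mul_sum,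
      ← Finset.sum_add_distrib, Finset.mul_sum]
    refine Finset.sum_congr rfl fun j _ => ?_
    simp [Complex.mul_re, Complex.mul_im, Complex.normSq_apply, pow_two]
    ring
  -- arithmetic facts
  have f1 : |1 - 2 / r| * r = |r - 2| := by
    have e : 1 - 2 / r = (r - 2) / r := by field_simp
    rw [e, abs_div, abs_of_pos hr, div_mul_cancel₀ _ hr.ne']
  have f2 : a ^ (r - 4) * a ^ (2 : ℕ) = a ^ (r - 2) := by
    rw [← Real.rpow_natCast a 2, ← Real.rpow_add ha]
    congr 1
    ring
  have f3 : Complex.normSq ζ = a ^ (2 : ℕ) := (Complex.sq_norm ζ).symm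
  have f4 : |W| ≤ a ^ (2 : ℕ) * ‖B‖ := by
    have h := Complex.abs_re_le_norm ((starRingEnd ℂ) ζ ^ 2 * B)
    rwa [norm_mul, norm_pow, Complex.norm_conj] at h
  have hpow4 : (0 : ℝ) ≤ a ^ (r - 4) := Real.rpow_nonneg ha.le _
  have hpow2 : (0 : ℝ) ≤ a ^ (r - 2) := Real.rpow_nonneg ha.le _
  have hmain : Paper.HFA (Paper.Fpow r) A ζ ξ =
      r * (r - 2) / 2 * a ^ (r - 4) * W + r ^ 2 / 2 * a ^ (r - 2) * S := by
    rw [hHFA, hT]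
    linear_combination (r * (r - 2) / 2 * S) * f2 + (r * (r - 2) / 2 * a ^ (r - 4) * S) * f3
  have hK2abs : |r * (r - 2) / 2 * a ^ (r - 4)| = r / 2 * |r - 2| * a ^ (r - 4) := by
    have e : r * (r - 2) / 2 * a ^ (r - 4) = (r / 2) * ((r - 2) * a ^ (r - 4)) := by ring
    rw [e, abs_mul, abs_mul, abs_of_pos (half_pos hr), _root_.abs_of_nonneg hpow4]
    ring
  have step1 : -(r / 2 * |r - 2| * a ^ (r - 4) * (a ^ (2 : ℕ) * ‖B‖)) ≤
      r * (r - 2) / 2 * a ^ (r - 4) * W := by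
    have h0 := neg_abs_le (r * (r - 2) / 2 * a ^ (r - 4) * W)
    have h1 : |r * (r - 2) / 2 * a ^ (r - 4) * W| ≤
        r / 2 * |r - 2| * a ^ (r - 4) * (a ^ (2 : ℕ) * ‖B‖) := by
      rw [abs_mul, hK2abs]
      exact mul_le_mul_of_nonneg_left f4 (by positivity)
    linarith
  have step2 : r / 2 * |r - 2| * a ^ (r - 4) * (a ^ (2 : ℕ) * ‖B‖) =
      r ^ 2 / 2 * a ^ (r - 2) * (|1 - 2 / r| * ‖B‖) := by
    rw [← f1, ← f2]; ring
  have hDel := Paper.deltaGen_le hr hlam hA ξ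
  rw [← hS, ← hB] at hDel
  have hfinal := mul_le_mul_of_nonneg_left hDel
    (show (0 : ℝ) ≤ r ^ 2 / 2 * a ^ (r - 2) by positivity)
  rw [hmain]
  nlinarith [step1, step2, hfinal]
end
end

section
/- Let p ∈ (1,∞) and let A = U + iV be an n×n complex matrix (U = Re A, V = Im A entrywise) with Re⟨Aξ,ξ⟩ > 0 for all ξ ∈ ℂⁿ∖{0} (so U_s is positive definite). Then for all ζ ∈ ℂ∖{0} and ξ ∈ ℂⁿ∖{0} one has H_{F_p}^{U}[ζ;ξ] > 0, and the supremum over all ζ ∈ ℂ∖{0} and ξ ∈ ℂⁿ∖{0} of the quotient |H_{F_p}^{iV}[ζ;ξ]| / H_{F_p}^{U}[ζ;ξ] equals ‖𝒲_p(A)‖. -/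
open scoped BigOperators ComplexConjugate Matrix

noncomputable section

namespace S7
open Paper

/-! ### Second derivative of the power function -/

def dotC (z w : ℂ) : ℝ := z.re * w.re + z.im * w.im

def Lc : ℂ →L[ℝ] ℂ →L[ℝ] ℝ :=
  Complex.reCLM.smulRight Complex.reCLM + Complex.imCLM.smulRight Complex.imCLM

lemma Lc_apply (z w : ℂ) : Lc z w = dotC z w := by simp [Lc, dotC, mul_comm]

lemma hasFDerivAt_normSq (z : ℂ) :
    HasFDerivAt Complex.normSq ((2:ℝ) • Lc z) z := by
  have h := (Complex.reCLM.hasFDerivAt (x := z)).mul (Complex.reCLM.hasFDerivAt (x := z))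
  have h2 := (Complex.imCLM.hasFDerivAt (x := z)).mul (Complex.imCLM.hasFDerivAt (x := z))
  have h3 := h.add h2
  have h4 : HasFDerivAt (fun w : ℂ => Complex.normSq w)
      (z.re • Complex.reCLM + z.re • Complex.reCLM
        + (z.im • Complex.imCLM + z.im • Complex.imCLM)) z := by
    exact h3.congr_of_eventuallyEq (Filter.Eventually.of_forall fun w => by simp [Complex.normSq_apply])
  convert h4 using 1
  ext w
  simp [Lc]
  ring

lemma hasFDerivAt_normSq_rpow (r : ℝ) {z : ℂ} (hz : z ≠ 0) :
    HasFDerivAt (fun w : ℂ => Complex.normSq w ^ r)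
      ((2 * r * Complex.normSq z ^ (r - 1)) • Lc z) z := by
  have hs : Complex.normSq z ≠ 0 := fun h => hz (Complex.normSq_eq_zero.mp h)
  have hr := Real.hasDerivAt_rpow_const (x := Complex.normSq z) (p := r) (Or.inl hs)
  have h2 : HasFDerivAt (fun w : ℂ => Complex.normSq w ^ r)
      ((r * Complex.normSq z ^ (r - 1)) • ((2:ℝ) • Lc z)) z :=
    hr.comp_hasFDerivAt z (hasFDerivAt_normSq z)
  convert h2 using 1
  rw [smul_smul]; ring_nf

def G (p : ℝ) (z : ℂ) : ℂ →L[ℝ] ℝ := (p * Complex.normSq z ^ (p/2 - 1)) • Lc z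

lemma hasFDerivAt_F (p : ℝ) {z : ℂ} (hz : z ≠ 0) :
    HasFDerivAt (fun w : ℂ => Complex.normSq w ^ (p/2)) (G p z) z := by
  have h := hasFDerivAt_normSq_rpow (p/2) hz
  have : G p z = (2 * (p/2) * Complex.normSq z ^ (p/2 - 1)) • Lc z := by
    unfold G; ring_nf
  rw [this]; exact h

lemma fpow_eq (p : ℝ) : Paper.Fpow p = fun z : ℂ => Complex.normSq z ^ (p/2) := by
  funext z
  rw [Paper.Fpow, Complex.norm_def, Real.sqrt_eq_rpow,
    ← Real.rpow_mul (Complex.normSq_nonneg z), one_div, inv_mul_eq_div]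

lemma hasFDerivAt_G (p : ℝ) {z : ℂ} (hz : z ≠ 0) :
    HasFDerivAt (G p)
      ((p * Complex.normSq z ^ (p/2 - 1)) • Lc
        + ((p * (p-2) * Complex.normSq z ^ (p/2 - 2)) • Lc z).smulRight (Lc z)) z := by
  have hc : HasFDerivAt (fun w : ℂ => p * Complex.normSq w ^ (p/2 - 1))
      ((p * (p-2) * Complex.normSq z ^ (p/2 - 2)) • Lc z) z := by
    have h := (hasFDerivAt_normSq_rpow (p/2 - 1) hz).const_mul p
    have heq : (p : ℝ) • ((2 * (p/2 - 1) * Complex.normSq z ^ (p/2 - 1 - 1)) • Lc z)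
        = (p * (p-2) * Complex.normSq z ^ (p/2 - 2)) • Lc z := by
      rw [smul_smul]; ring_nf
    rwa [heq] at h
  have hL : HasFDerivAt (fun w : ℂ => Lc w) Lc z := Lc.hasFDerivAt
  exact hc.smul hL

lemma d2_formula (p : ℝ) {ζ : ℂ} (hζ : ζ ≠ 0) (ξ η : ℂ) :
    Paper.D2 (Paper.Fpow p) ζ ξ η =
      p * Complex.normSq ζ ^ (p/2 - 1) * dotC ξ η
      + p * (p-2) * Complex.normSq ζ ^ (p/2 - 2) * dotC ζ ξ * dotC ζ η := by
  have hev : fderiv ℝ (Paper.Fpow p) =ᶠ[nhds ζ] G p := by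
    filter_upwards [compl_singleton_mem_nhds hζ] with z hz
    rw [fpow_eq]
    exact (hasFDerivAt_F p hz).fderiv
  have h2 : fderiv ℝ (fderiv ℝ (Paper.Fpow p)) ζ = fderiv ℝ (G p) ζ :=
    Filter.EventuallyEq.fderiv_eq hev
  rw [Paper.D2, h2, (hasFDerivAt_G p hζ).fderiv]
  simp only [ContinuousLinearMap.add_apply, ContinuousLinearMap.smul_apply,
    ContinuousLinearMap.smulRight_apply, Lc_apply, smul_eq_mul]

/-! ### HFA formulas -/

variable {n : ℕ}

def av (ξ : Fin n → ℂ) : Fin n → ℝ := fun j => (ξ j).re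
def bv (ξ : Fin n → ℂ) : Fin n → ℝ := fun j => (ξ j).im
def Xv (ζ : ℂ) (ξ : Fin n → ℂ) : Fin n → ℝ := fun j => ζ.re * (ξ j).re + ζ.im * (ξ j).im
def Yv (ζ : ℂ) (ξ : Fin n → ℂ) : Fin n → ℝ := fun j => ζ.re * (ξ j).im - ζ.im * (ξ j).re

lemma mulVec_X (U : Matrix (Fin n) (Fin n) ℝ) (ζ : ℂ) (ξ : Fin n → ℂ) (j : Fin n) :
    U.mulVec (Xv ζ ξ) j = ζ.re * U.mulVec (av ξ) j + ζ.im * U.mulVec (bv ξ) j := by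
  simp only [Matrix.mulVec, dotProduct, Xv, av, bv, Finset.mul_sum,
    ← Finset.sum_add_distrib]
  exact Finset.sum_congr rfl fun k _ => by ring

lemma mulVec_Y (U : Matrix (Fin n) (Fin n) ℝ) (ζ : ℂ) (ξ : Fin n → ℂ) (j : Fin n) :
    U.mulVec (Yv ζ ξ) j = ζ.re * U.mulVec (bv ξ) j - ζ.im * U.mulVec (av ξ) j := by
  simp only [Matrix.mulVec, dotProduct, Yv, av, bv, Finset.mul_sum,
    ← Finset.sum_sub_distrib]
  exact Finset.sum_congr rfl fun k _ => by ring

lemma cplx_re (U V : Matrix (Fin n) (Fin n) ℝ) (ξ : Fin n → ℂ) (j : Fin n) :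
    ((Paper.cplx U V).mulVec ξ j).re = U.mulVec (av ξ) j - V.mulVec (bv ξ) j := by
  simp only [Paper.cplx, Matrix.mulVec, dotProduct, Matrix.of_apply, Complex.re_sum,
    av, bv, ← Finset.sum_sub_distrib]
  exact Finset.sum_congr rfl fun k _ => by
    simp [Complex.add_re, Complex.mul_re]
    try ring

lemma cplx_im (U V : Matrix (Fin n) (Fin n) ℝ) (ξ : Fin n → ℂ) (j : Fin n) :
    ((Paper.cplx U V).mulVec ξ j).im = U.mulVec (bv ξ) j + V.mulVec (av ξ) j := by
  simp only [Paper.cplx, Matrix.mulVec, dotProduct, Matrix.of_apply, Complex.im_sum,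
    av, bv, ← Finset.sum_add_distrib]
  exact Finset.sum_congr rfl fun k _ => by
    simp [Complex.add_im, Complex.mul_im]
    try ring

lemma cplxU_re (U : Matrix (Fin n) (Fin n) ℝ) (ξ : Fin n → ℂ) (j : Fin n) :
    ((Paper.cplx U 0).mulVec ξ j).re = U.mulVec (av ξ) j := by
  rw [cplx_re]; simp [Matrix.zero_mulVec]

lemma cplxU_im (U : Matrix (Fin n) (Fin n) ℝ) (ξ : Fin n → ℂ) (j : Fin n) :
    ((Paper.cplx U 0).mulVec ξ j).im = U.mulVec (bv ξ) j := by
  rw [cplx_im]; simp [Matrix.zero_mulVec]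

lemma cplxV_re (V : Matrix (Fin n) (Fin n) ℝ) (ξ : Fin n → ℂ) (j : Fin n) :
    ((Paper.cplx 0 V).mulVec ξ j).re = -(V.mulVec (bv ξ) j) := by
  rw [cplx_re]; simp [Matrix.zero_mulVec]

lemma cplxV_im (V : Matrix (Fin n) (Fin n) ℝ) (ξ : Fin n → ℂ) (j : Fin n) :
    ((Paper.cplx 0 V).mulVec ξ j).im = V.mulVec (av ξ) j := by
  rw [cplx_im]; simp [Matrix.zero_mulVec]

lemma rpow_split (p : ℝ) {ζ : ℂ} (hζ : ζ ≠ 0) :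
    Complex.normSq ζ ^ (p/2 - 1) = Complex.normSq ζ ^ (p/2 - 2) * Complex.normSq ζ := by
  have hs : Complex.normSq ζ ≠ 0 := fun h => hζ (Complex.normSq_eq_zero.mp h)
  rw [show p/2 - 1 = (p/2 - 2) + 1 by ring, Real.rpow_add_one hs]

lemma hfa_U (p : ℝ) (U : Matrix (Fin n) (Fin n) ℝ) {ζ : ℂ} (hζ : ζ ≠ 0) (ξ : Fin n → ℂ) :
    Paper.HFA (Paper.Fpow p) (Paper.cplx U 0) ζ ξ =
      p * Complex.normSq ζ ^ (p/2 - 2) *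
        ((p-1) * Paper.rdot (Xv ζ ξ) (U.mulVec (Xv ζ ξ))
          + Paper.rdot (Yv ζ ξ) (U.mulVec (Yv ζ ξ))) := by
  unfold Paper.HFA Paper.rdot
  simp only [Finset.mul_sum, ← Finset.sum_add_distrib]
  refine Finset.sum_congr rfl fun j _ => ?_
  rw [d2_formula p hζ, rpow_split p hζ]
  simp only [dotC, cplxU_re, cplxU_im, mulVec_X, mulVec_Y, Xv, Yv, Complex.normSq_apply, av, bv]
  ring

lemma hfa_V (p : ℝ) (V : Matrix (Fin n) (Fin n) ℝ) {ζ : ℂ} (hζ : ζ ≠ 0) (ξ : Fin n → ℂ) :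
    Paper.HFA (Paper.Fpow p) (Paper.cplx 0 V) ζ ξ =
      p * Complex.normSq ζ ^ (p/2 - 2) *
        (Paper.rdot (Yv ζ ξ) (V.mulVec (Xv ζ ξ))
          - (p-1) * Paper.rdot (Xv ζ ξ) (V.mulVec (Yv ζ ξ))) := by
  unfold Paper.HFA Paper.rdot
  simp only [Finset.mul_sum, ← Finset.sum_sub_distrib]
  refine Finset.sum_congr rfl fun j _ => ?_
  rw [d2_formula p hζ, rpow_split p hζ]
  simp only [dotC, cplxV_re, cplxV_im, mulVec_X, mulVec_Y, Xv, Yv, Complex.normSq_apply, av, bv]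
  ring

/-! ### real dot product basics -/

lemma rdot_comm (u v : Fin n → ℝ) : Paper.rdot u v = Paper.rdot v u := by
  unfold Paper.rdot; exact Finset.sum_congr rfl fun j _ => mul_comm _ _

lemma rdot_self_nonneg (u : Fin n → ℝ) : 0 ≤ Paper.rdot u u :=
  Finset.sum_nonneg fun j _ => mul_self_nonneg _

lemma rdot_self_pos {u : Fin n → ℝ} (hu : u ≠ 0) : 0 < Paper.rdot u u := by
  obtain ⟨k, hk⟩ : ∃ k, u k ≠ 0 := by
    by_contra h
    push_neg at h
    exact hu (funext fun j => h j)
  exact Finset.sum_pos' (fun j _ => mul_self_nonneg _)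
    ⟨k, Finset.mem_univ k, mul_self_pos.mpr hk⟩

lemma enorm_sq (u : Fin n → ℝ) : Paper.enorm u ^ 2 = Paper.rdot u u := by
  rw [Paper.enorm, Real.sq_sqrt (Finset.sum_nonneg fun j _ => sq_nonneg _)]
  unfold Paper.rdot
  exact Finset.sum_congr rfl fun j _ => (sq (u j)).symm ▸ by ring

lemma enorm_nonneg (u : Fin n → ℝ) : 0 ≤ Paper.enorm u := Real.sqrt_nonneg _

lemma enorm_eq_zero {u : Fin n → ℝ} : Paper.enorm u = 0 ↔ u = 0 := by
  rw [Paper.enorm, Real.sqrt_eq_zero (Finset.sum_nonneg fun j _ => sq_nonneg _)]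
  constructor
  · intro h
    funext j
    have := (Finset.sum_eq_zero_iff_of_nonneg (fun j _ => sq_nonneg (u j))).mp h j
      (Finset.mem_univ j)
    exact pow_eq_zero_iff (by norm_num) |>.mp this
  · rintro rfl; simp

lemma rdot_smul_left (c : ℝ) (u v : Fin n → ℝ) :
    Paper.rdot (fun j => c * u j) v = c * Paper.rdot u v := by
  unfold Paper.rdot
  rw [Finset.mul_sum]
  exact Finset.sum_congr rfl fun j _ => by ring

lemma rdot_smul_right (c : ℝ) (u v : Fin n → ℝ) :
    Paper.rdot u (fun j => c * v j) = c * Paper.rdot u v := by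
  unfold Paper.rdot
  rw [Finset.mul_sum]
  exact Finset.sum_congr rfl fun j _ => by ring

lemma rdot_mulVec_t (M : Matrix (Fin n) (Fin n) ℝ) (u v : Fin n → ℝ) :
    Paper.rdot u (M.mulVec v) = Paper.rdot (Mᵀ.mulVec u) v := by
  unfold Paper.rdot
  simp only [Matrix.mulVec, dotProduct, Matrix.transpose_apply, Finset.mul_sum,
    Finset.sum_mul]
  rw [Finset.sum_comm]
  exact Finset.sum_congr rfl fun j _ => Finset.sum_congr rfl fun k _ => by ring

lemma rdot_mulVec_l (M : Matrix (Fin n) (Fin n) ℝ) (u v : Fin n → ℝ) :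
    Paper.rdot (M.mulVec u) v = Paper.rdot u (Mᵀ.mulVec v) := by
  rw [rdot_comm, rdot_mulVec_t, rdot_comm]

lemma enorm_smul (c : ℝ) (u : Fin n → ℝ) :
    Paper.enorm (fun j => c * u j) = |c| * Paper.enorm u := by
  unfold Paper.enorm
  rw [← Real.sqrt_sq_eq_abs, ← Real.sqrt_mul (sq_nonneg c), Finset.mul_sum]
  congr 1
  exact Finset.sum_congr rfl fun j _ => by ring

lemma cauchy (u v : Fin n → ℝ) : |Paper.rdot u v| ≤ Paper.enorm u * Paper.enorm v := by
  have h := Finset.sum_mul_sq_le_sq_mul_sq Finset.univ u v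
  have h2 : |Paper.rdot u v| = Real.sqrt ((Paper.rdot u v) ^ 2) := (Real.sqrt_sq_eq_abs _).symm
  rw [h2, Paper.enorm, Paper.enorm, ← Real.sqrt_mul (Finset.sum_nonneg fun j _ => sq_nonneg _)]
  apply Real.sqrt_le_sqrt
  simpa [Paper.rdot] using h

lemma rdot_smul_left' (c : ℝ) (u v : Fin n → ℝ) :
    Paper.rdot (c • u) v = c * Paper.rdot u v := by
  unfold Paper.rdot
  rw [Finset.mul_sum]
  exact Finset.sum_congr rfl fun j _ => by simp only [Pi.smul_apply, smul_eq_mul]; ring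

lemma rdot_smul_right' (c : ℝ) (u v : Fin n → ℝ) :
    Paper.rdot u (c • v) = c * Paper.rdot u v := by
  unfold Paper.rdot
  rw [Finset.mul_sum]
  exact Finset.sum_congr rfl fun j _ => by simp only [Pi.smul_apply, smul_eq_mul]; ring

lemma rdot_add_right (u v w : Fin n → ℝ) :
    Paper.rdot u (v + w) = Paper.rdot u v + Paper.rdot u w := by
  unfold Paper.rdot
  rw [← Finset.sum_add_distrib]
  exact Finset.sum_congr rfl fun j _ => by simp only [Pi.add_apply]; ring

lemma rdot_sub_right (u v w : Fin n → ℝ) :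
    Paper.rdot u (v - w) = Paper.rdot u v - Paper.rdot u w := by
  unfold Paper.rdot
  rw [← Finset.sum_sub_distrib]
  exact Finset.sum_congr rfl fun j _ => by simp only [Pi.sub_apply]; ring

lemma rdot_zero_left (v : Fin n → ℝ) : Paper.rdot 0 v = 0 := by
  simp [Paper.rdot]

lemma enorm_smul' (c : ℝ) (u : Fin n → ℝ) :
    Paper.enorm (c • u) = |c| * Paper.enorm u := by
  unfold Paper.enorm
  rw [← Real.sqrt_sq_eq_abs, ← Real.sqrt_mul (sq_nonneg c), Finset.mul_sum]
  congr 1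
  exact Finset.sum_congr rfl fun j _ => by simp only [Pi.smul_apply, smul_eq_mul]; ring

lemma enorm_zero : Paper.enorm (0 : Fin n → ℝ) = 0 := enorm_eq_zero.mpr rfl

/-! ### recovering ξ from X, Y -/

lemma XY_ne {ζ : ℂ} (hζ : ζ ≠ 0) {ξ : Fin n → ℂ} (hξ : ξ ≠ 0) :
    ¬(Xv ζ ξ = 0 ∧ Yv ζ ξ = 0) := by
  rintro ⟨hX, hY⟩
  have hs : Complex.normSq ζ ≠ 0 := fun h => hζ (Complex.normSq_eq_zero.mp h)
  apply hξ
  funext j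
  have hXj : Xv ζ ξ j = 0 := by rw [hX]; rfl
  have hYj : Yv ζ ξ j = 0 := by rw [hY]; rfl
  have h1 : Complex.normSq ζ * (ξ j).re = 0 := by
    have : ζ.re * Xv ζ ξ j - ζ.im * Yv ζ ξ j = Complex.normSq ζ * (ξ j).re := by
      simp only [Xv, Yv, Complex.normSq_apply]; ring
    rw [hXj, hYj] at this; linarith [this]
  have h2 : Complex.normSq ζ * (ξ j).im = 0 := by
    have : ζ.im * Xv ζ ξ j + ζ.re * Yv ζ ξ j = Complex.normSq ζ * (ξ j).im := by
      simp only [Xv, Yv, Complex.normSq_apply]; ring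
    rw [hXj, hYj] at this; linarith [this]
  have hre := (mul_eq_zero.mp h1).resolve_left hs
  have him := (mul_eq_zero.mp h2).resolve_left hs
  exact Complex.ext hre him

/-! ### positivity -/

lemma hQ_pos {U V : Matrix (Fin n) (Fin n) ℝ}
    (hA : ∀ ξ : Fin n → ℂ, ξ ≠ 0 → 0 < (Paper.herm ((Paper.cplx U V).mulVec ξ) ξ).re)
    {z : Fin n → ℝ} (hz : z ≠ 0) : 0 < Paper.rdot z (U.mulVec z) := by
  set ξ : Fin n → ℂ := fun k => ((z k : ℝ) : ℂ) with hξdef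
  have hξ : ξ ≠ 0 := by
    intro h
    apply hz
    funext j
    have := congrFun h j
    simpa [hξdef] using this
  have hav : av ξ = z := funext fun j => by simp [av, hξdef]
  have hbv : bv ξ = (0 : Fin n → ℝ) := funext fun j => by simp [bv, hξdef]
  have h := hA ξ hξ
  rw [Paper.herm, Complex.re_sum] at h
  have hterm : ∀ j : Fin n,
      (((Paper.cplx U V).mulVec ξ j) * (starRingEnd ℂ) (ξ j)).re = U.mulVec z j * z j := by
    intro j
    rw [hξdef]
    rw [Complex.conj_ofReal, Complex.mul_re]
    simp only [Complex.ofReal_re, Complex.ofReal_im, mul_zero, sub_zero]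
    rw [← hξdef, cplx_re, hav, hbv, Matrix.mulVec_zero]
    simp
  rw [Finset.sum_congr rfl fun j _ => hterm j] at h
  have : Paper.rdot z (U.mulVec z) = ∑ j, U.mulVec z j * z j := by
    rw [rdot_comm]; rfl
  rw [this]
  exact h

lemma part1 {p : ℝ} (hp : 1 < p) (U V : Matrix (Fin n) (Fin n) ℝ)
    (hA : ∀ ξ : Fin n → ℂ, ξ ≠ 0 → 0 < (Paper.herm ((Paper.cplx U V).mulVec ξ) ξ).re) :
    ∀ ζ : ℂ, ζ ≠ 0 → ∀ ξ : Fin n → ℂ, ξ ≠ 0 →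
      0 < Paper.HFA (Paper.Fpow p) (Paper.cplx U 0) ζ ξ := by
  intro ζ hζ ξ hξ
  rw [hfa_U p U hζ ξ]
  have hp0 : (0:ℝ) < p := by linarith
  have hcoef : 0 < p * Complex.normSq ζ ^ (p/2 - 2) :=
    mul_pos hp0 (Real.rpow_pos_of_pos (Complex.normSq_pos.mpr hζ) _)
  apply mul_pos hcoef
  have hnonneg : ∀ z : Fin n → ℝ, 0 ≤ Paper.rdot z (U.mulVec z) := by
    intro z
    by_cases hz : z = 0
    · rw [hz, rdot_zero_left]
    · exact (hQ_pos hA hz).le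
  rcases not_and_or.mp (XY_ne hζ hξ) with h | h
  · have h1 := hQ_pos hA h
    have h2 := hnonneg (Yv ζ ξ)
    nlinarith
  · have h1 := hQ_pos hA h
    have h2 := hnonneg (Xv ζ ξ)
    nlinarith

/-! ### the matrix identity for Vmap -/

lemma vmap_id {p : ℝ} (hp : 1 < p) (V : Matrix (Fin n) (Fin n) ℝ) :
    Vᵀ - (p-1) • V = (-2 * Real.sqrt (p-1)) • Paper.Vmap p V := by
  have hq0 : Real.sqrt (p-1) ≠ 0 := by
    refine ne_of_gt (Real.sqrt_pos.mpr ?_); linarith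
  ext i j
  simp only [Paper.Vmap, Paper.symPart, Paper.antiPart, Matrix.sub_apply, Matrix.add_apply,
    Matrix.smul_apply, Matrix.transpose_apply, smul_eq_mul]
  field_simp
  ring

/-! ### S facts and the two identities -/

lemma key_quad {U S : Matrix (Fin n) (Fin n) ℝ} (hSt : Sᵀ = S)
    (hSS : S * S = Paper.symPart U) (z : Fin n → ℝ) :
    Paper.rdot z (U.mulVec z) = Paper.rdot (S.mulVec z) (S.mulVec z) := by
  have h1 : Paper.rdot z (Uᵀ.mulVec z) = Paper.rdot z (U.mulVec z) := by
    rw [rdot_mulVec_t, Matrix.transpose_transpose, rdot_comm]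
  have h2 : Paper.rdot z ((Paper.symPart U).mulVec z) = Paper.rdot z (U.mulVec z) := by
    rw [Paper.symPart, Matrix.smul_mulVec, rdot_smul_right', Matrix.add_mulVec,
      rdot_add_right, h1]
    ring
  calc Paper.rdot z (U.mulVec z) = Paper.rdot z ((Paper.symPart U).mulVec z) := h2.symm
    _ = Paper.rdot z ((S * S).mulVec z) := by rw [hSS]
    _ = Paper.rdot z (S.mulVec (S.mulVec z)) := by rw [Matrix.mulVec_mulVec]
    _ = Paper.rdot (Sᵀ.mulVec z) (S.mulVec z) := by rw [rdot_mulVec_t]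
    _ = Paper.rdot (S.mulVec z) (S.mulVec z) := by rw [hSt]

lemma id1 {p : ℝ} (hp : 1 < p) {U S : Matrix (Fin n) (Fin n) ℝ} (hSt : Sᵀ = S)
    (hSS : S * S = Paper.symPart U) (x : Fin n → ℝ) :
    Paper.rdot (Real.sqrt (p-1) • S.mulVec x) (Real.sqrt (p-1) • S.mulVec x)
      = (p-1) * Paper.rdot x (U.mulVec x) := by
  rw [rdot_smul_left', rdot_smul_right', ← mul_assoc,
    Real.mul_self_sqrt (by linarith : (0:ℝ) ≤ p - 1), ← key_quad hSt hSS]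

lemma sws_id {p : ℝ} {S : Matrix (Fin n) (Fin n) ℝ} (V : Matrix (Fin n) (Fin n) ℝ)
    (hSt : Sᵀ = S) (hdet : IsUnit S.det) :
    Sᵀ * ((S⁻¹ * Paper.Vmap p V * S⁻¹ * S)) = Paper.Vmap p V := by
  rw [hSt, Matrix.mul_assoc (S⁻¹ * Paper.Vmap p V) S⁻¹ S, Matrix.nonsing_inv_mul S hdet,
    Matrix.mul_one, ← Matrix.mul_assoc, Matrix.mul_nonsing_inv S hdet, Matrix.one_mul]

lemma id2 {p : ℝ} (hp : 1 < p) {S : Matrix (Fin n) (Fin n) ℝ} (V : Matrix (Fin n) (Fin n) ℝ)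
    (hSt : Sᵀ = S) (hdet : IsUnit S.det) (x y : Fin n → ℝ) :
    Paper.rdot y (V.mulVec x) - (p-1) * Paper.rdot x (V.mulVec y)
      = -2 * Paper.rdot (Real.sqrt (p-1) • S.mulVec x)
          ((S⁻¹ * Paper.Vmap p V * S⁻¹).mulVec (S.mulVec y)) := by
  have hL : Paper.rdot y (V.mulVec x) - (p-1) * Paper.rdot x (V.mulVec y)
      = Paper.rdot x ((Vᵀ - (p-1) • V).mulVec y) := by
    rw [Matrix.sub_mulVec, rdot_sub_right, Matrix.smul_mulVec, rdot_smul_right']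
    congr 1
    rw [rdot_comm, rdot_mulVec_l]
  have hR : Paper.rdot (Real.sqrt (p-1) • S.mulVec x)
        ((S⁻¹ * Paper.Vmap p V * S⁻¹).mulVec (S.mulVec y))
      = Real.sqrt (p-1) * Paper.rdot x ((Paper.Vmap p V).mulVec y) := by
    rw [rdot_smul_left', Matrix.mulVec_mulVec, rdot_mulVec_l, Matrix.mulVec_mulVec,
      sws_id V hSt hdet]
  rw [hL, hR, vmap_id hp V, Matrix.smul_mulVec, rdot_smul_right']
  ring

lemma quotient_formula {p : ℝ} (hp : 1 < p) {U S : Matrix (Fin n) (Fin n) ℝ}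
    (V : Matrix (Fin n) (Fin n) ℝ) (hSt : Sᵀ = S) (hdet : IsUnit S.det)
    (hSS : S * S = Paper.symPart U) {ζ : ℂ} (hζ : ζ ≠ 0) (ξ : Fin n → ℂ) :
    |Paper.HFA (Paper.Fpow p) (Paper.cplx 0 V) ζ ξ|
        / Paper.HFA (Paper.Fpow p) (Paper.cplx U 0) ζ ξ
      = 2 * |Paper.rdot (Real.sqrt (p-1) • S.mulVec (Xv ζ ξ))
            ((S⁻¹ * Paper.Vmap p V * S⁻¹).mulVec (S.mulVec (Yv ζ ξ)))|
          / (Paper.rdot (Real.sqrt (p-1) • S.mulVec (Xv ζ ξ))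
                (Real.sqrt (p-1) • S.mulVec (Xv ζ ξ))
              + Paper.rdot (S.mulVec (Yv ζ ξ)) (S.mulVec (Yv ζ ξ))) := by
  have hp0 : (0:ℝ) < p := by linarith
  have hκ : (0:ℝ) < p * Complex.normSq ζ ^ (p/2 - 2) :=
    mul_pos hp0 (Real.rpow_pos_of_pos (Complex.normSq_pos.mpr hζ) _)
  rw [hfa_U p U hζ ξ, hfa_V p V hζ ξ, abs_mul, abs_of_pos hκ,
    mul_div_mul_left _ _ (ne_of_gt hκ)]
  rw [id2 hp V hSt hdet (Xv ζ ξ) (Yv ζ ξ), id1 hp hSt hSS (Xv ζ ξ),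
    key_quad hSt hSS (Yv ζ ξ)]
  rw [abs_mul]
  norm_num

/-! ### the sup lemma -/

lemma sup_lemma (W : Matrix (Fin n) (Fin n) ℝ) :
    sSup {t : ℝ | ∃ u v : Fin n → ℝ, ¬(u = 0 ∧ v = 0) ∧
        t = 2 * |Paper.rdot u (W.mulVec v)| / (Paper.rdot u u + Paper.rdot v v)}
      = Paper.opnormR W := by
  rcases Nat.eq_zero_or_pos n with hn | hn
  · subst hn
    have h1 : {t : ℝ | ∃ u v : Fin 0 → ℝ, ¬(u = 0 ∧ v = 0) ∧
        t = 2 * |Paper.rdot u (W.mulVec v)| / (Paper.rdot u u + Paper.rdot v v)} = ∅ := by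
      ext t
      simp only [Set.mem_setOf_eq, Set.mem_empty_iff_false, iff_false]
      rintro ⟨u, v, huv, -⟩
      exact huv ⟨funext fun j => j.elim0, funext fun j => j.elim0⟩
    have h2 : {t : ℝ | ∃ u : Fin 0 → ℝ, Paper.enorm u = 1 ∧ t = Paper.enorm (W.mulVec u)} = ∅ := by
      ext t
      simp only [Set.mem_setOf_eq, Set.mem_empty_iff_false, iff_false]
      rintro ⟨u, hu, -⟩
      have : u = 0 := funext fun j => j.elim0
      rw [this, enorm_zero] at hu
      norm_num at hu
    rw [Paper.opnormR, h1, h2]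
  · -- n positive
    have j0 : Fin n := ⟨0, hn⟩
    set e0 : Fin n → ℝ := fun j => if j = j0 then 1 else 0 with he0def
    have he0 : Paper.enorm e0 = 1 := by
      rw [Paper.enorm]
      have : (∑ j, e0 j ^ 2) = 1 := by
        rw [he0def]
        simp [Finset.sum_ite_eq']
      rw [this, Real.sqrt_one]
    have he0ne : e0 ≠ 0 := by
      intro h
      have := congrFun h j0
      simp [he0def] at this
    set Kf : ℝ := Real.sqrt (∑ j, ∑ k, W j k ^ 2) with hKf
    have hbound : ∀ u : Fin n → ℝ, Paper.enorm u = 1 → Paper.enorm (W.mulVec u) ≤ Kf := by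
      intro u hu
      have hsum : (∑ j, u j ^ 2) = 1 := by
        have h := congrArg (· ^ 2) hu
        simpa [Paper.enorm, Real.sq_sqrt (Finset.sum_nonneg fun j _ => sq_nonneg (u j))] using h
      rw [Paper.enorm, hKf]
      apply Real.sqrt_le_sqrt
      have hcs : ∀ j : Fin n, (W.mulVec u j) ^ 2 ≤ (∑ k, W j k ^ 2) := by
        intro j
        have h := Finset.sum_mul_sq_le_sq_mul_sq Finset.univ (fun k => W j k) u
        have h2 : W.mulVec u j = ∑ k, W j k * u k := rfl
        rw [h2]
        calc (∑ k, W j k * u k) ^ 2 ≤ (∑ k, W j k ^ 2) * (∑ k, u k ^ 2) := h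
          _ = ∑ k, W j k ^ 2 := by rw [hsum, mul_one]
      exact Finset.sum_le_sum fun j _ => hcs j
    set set2 : Set ℝ := {t : ℝ | ∃ u : Fin n → ℝ, Paper.enorm u = 1 ∧
      t = Paper.enorm (W.mulVec u)} with hset2
    have hne2 : set2.Nonempty := ⟨Paper.enorm (W.mulVec e0), e0, he0, rfl⟩
    have hbd2 : BddAbove set2 := ⟨Kf, by rintro t ⟨u, hu, rfl⟩; exact hbound u hu⟩
    have hopn : Paper.opnormR W = sSup set2 := rfl
    set c : ℝ := sSup set2 with hc
    have hc0 : 0 ≤ c :=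
      le_trans (enorm_nonneg (W.mulVec e0)) (le_csSup hbd2 ⟨e0, he0, rfl⟩)
    have hWle : ∀ v : Fin n → ℝ, Paper.enorm (W.mulVec v) ≤ c * Paper.enorm v := by
      intro v
      by_cases hv : v = 0
      · rw [hv, Matrix.mulVec_zero, enorm_zero]
        simp
      · have hr : 0 < Paper.enorm v := by
          rcases lt_or_eq_of_le (enorm_nonneg v) with h | h
          · exact h
          · exact absurd (enorm_eq_zero.mp h.symm) hv
        have hv1 : Paper.enorm ((Paper.enorm v)⁻¹ • v) = 1 := by
          rw [enorm_smul', abs_of_pos (inv_pos.mpr hr), inv_mul_cancel₀ (ne_of_gt hr)]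
        have hmem : Paper.enorm (W.mulVec ((Paper.enorm v)⁻¹ • v)) ∈ set2 :=
          ⟨(Paper.enorm v)⁻¹ • v, hv1, rfl⟩
        have hle := le_csSup hbd2 hmem
        have heq : Paper.enorm (W.mulVec ((Paper.enorm v)⁻¹ • v))
            = (Paper.enorm v)⁻¹ * Paper.enorm (W.mulVec v) := by
          rw [Matrix.mulVec_smul, enorm_smul', abs_of_pos (inv_pos.mpr hr)]
        rw [heq] at hle
        calc Paper.enorm (W.mulVec v)
            = Paper.enorm v * ((Paper.enorm v)⁻¹ * Paper.enorm (W.mulVec v)) := by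
              field_simp
          _ ≤ Paper.enorm v * c := by
              exact mul_le_mul_of_nonneg_left hle (le_of_lt hr)
          _ = c * Paper.enorm v := mul_comm _ _
    set R2 : Set ℝ := {t : ℝ | ∃ u v : Fin n → ℝ, ¬(u = 0 ∧ v = 0) ∧
        t = 2 * |Paper.rdot u (W.mulVec v)| / (Paper.rdot u u + Paper.rdot v v)} with hR2
    have hneR : R2.Nonempty :=
      ⟨_, e0, e0, fun h => he0ne h.1, rfl⟩
    have hRle : ∀ t ∈ R2, t ≤ c := by
      rintro t ⟨u, v, huv, rfl⟩
      have hden : 0 < Paper.rdot u u + Paper.rdot v v := by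
        rcases not_and_or.mp huv with h | h
        · exact add_pos_of_pos_of_nonneg (rdot_self_pos h) (rdot_self_nonneg v)
        · exact add_pos_of_nonneg_of_pos (rdot_self_nonneg u) (rdot_self_pos h)
      rw [div_le_iff₀ hden]
      have h1 : |Paper.rdot u (W.mulVec v)| ≤ Paper.enorm u * (c * Paper.enorm v) :=
        le_trans (cauchy u (W.mulVec v))
          (mul_le_mul_of_nonneg_left (hWle v) (enorm_nonneg u))
      have h3 : 2 * (Paper.enorm u * Paper.enorm v)
          ≤ Paper.enorm u ^ 2 + Paper.enorm v ^ 2 := by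
        nlinarith [sq_nonneg (Paper.enorm u - Paper.enorm v)]
      have h4 : Paper.enorm u ^ 2 = Paper.rdot u u := enorm_sq u
      have h5 : Paper.enorm v ^ 2 = Paper.rdot v v := enorm_sq v
      nlinarith [h1, h3, hc0, abs_nonneg (Paper.rdot u (W.mulVec v))]
    have hbdR : BddAbove R2 := ⟨c, hRle⟩
    have hle1 : sSup R2 ≤ c := csSup_le hneR hRle
    have hle2 : c ≤ sSup R2 := by
      apply csSup_le hne2
      rintro t ⟨v, hv, rfl⟩
      have hv0 : v ≠ 0 := by
        intro h
        rw [h, enorm_zero] at hv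
        norm_num at hv
      by_cases hWv : W.mulVec v = 0
      · rw [hWv, enorm_zero]
        refine le_trans ?_ (le_csSup hbdR (⟨e0, e0, fun h => he0ne h.1, rfl⟩ : _ ∈ R2))
        apply div_nonneg
        · positivity
        · exact add_nonneg (rdot_self_nonneg e0) (rdot_self_nonneg e0)
      · set w := W.mulVec v with hw
        have hrw : 0 < Paper.enorm w := by
          rcases lt_or_eq_of_le (enorm_nonneg w) with h | h
          · exact h
          · exact absurd (enorm_eq_zero.mp h.symm) hWv
        set u : Fin n → ℝ := (Paper.enorm w)⁻¹ • w with hu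
        have hdotv : Paper.rdot u (W.mulVec v) = Paper.enorm w := by
          rw [hu, ← hw, rdot_smul_left', ← enorm_sq w]
          field_simp
        have hruu : Paper.rdot u u = 1 := by
          rw [← enorm_sq, hu, enorm_smul', abs_of_pos (inv_pos.mpr hrw),
            inv_mul_cancel₀ (ne_of_gt hrw), one_pow]
        have hrvv : Paper.rdot v v = 1 := by
          rw [← enorm_sq, hv, one_pow]
        have hval : 2 * |Paper.rdot u (W.mulVec v)| / (Paper.rdot u u + Paper.rdot v v)
            = Paper.enorm w := by
          rw [hdotv, hruu, hrvv, abs_of_pos hrw]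
          ring
        have hmem : Paper.enorm w ∈ R2 := ⟨u, v, fun h => hv0 h.2, hval.symm⟩
        exact le_csSup hbdR hmem
    rw [hopn]
    exact le_antisymm hle1 hle2

end S7
/-- for accretive `A = U + iV`, `H_{F_p}^U[ζ;ξ] > 0` for `ζ ≠ 0`, `ξ ≠ 0`,
and `sup |H_{F_p}^{iV}[ζ;ξ]| / H_{F_p}^U[ζ;ξ] = ‖𝒲_p(A)‖`. -/
theorem statement7 (n : ℕ) (p : ℝ) (hp : 1 < p)
    (U V : Matrix (Fin n) (Fin n) ℝ)
    (hA : ∀ ξ : Fin n → ℂ, ξ ≠ 0 → 0 < (Paper.herm ((Paper.cplx U V).mulVec ξ) ξ).re) :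
    (∀ ζ : ℂ, ζ ≠ 0 → ∀ ξ : Fin n → ℂ, ξ ≠ 0 →
      0 < Paper.HFA (Paper.Fpow p) (Paper.cplx U 0) ζ ξ) ∧
    ∀ S : Matrix (Fin n) (Fin n) ℝ, Paper.RPosDef S → S * S = Paper.symPart U →
      sSup {t : ℝ | ∃ ζ : ℂ, ζ ≠ 0 ∧ ∃ ξ : Fin n → ℂ, ξ ≠ 0 ∧
          t = |Paper.HFA (Paper.Fpow p) (Paper.cplx 0 V) ζ ξ| /
              Paper.HFA (Paper.Fpow p) (Paper.cplx U 0) ζ ξ}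
        = Paper.opnormR (S⁻¹ * Paper.Vmap p V * S⁻¹) := by
  constructor
  · exact S7.part1 hp U V hA
  · intro S hS hSS
    obtain ⟨hSt, hSpos⟩ := hS
    have hinj : Function.Injective S.mulVec := by
      intro a b hab
      by_contra hne
      have hz : a - b ≠ 0 := sub_ne_zero.mpr hne
      have h0 : S.mulVec (a - b) = 0 := by
        rw [Matrix.mulVec_sub, hab, sub_self]
      have hpos := hSpos (a - b) hz
      rw [h0, S7.rdot_zero_left] at hpos
      exact lt_irrefl _ hpos
    have hunit : IsUnit S := Matrix.mulVec_injective_iff_isUnit.mp hinj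
    have hdet : IsUnit S.det := (Matrix.isUnit_iff_isUnit_det S).mp hunit
    have hsq : Real.sqrt (p - 1) ≠ 0 := ne_of_gt (Real.sqrt_pos.mpr (by linarith))
    have hSmvz : ∀ z : Fin n → ℝ, S.mulVec z = 0 → z = 0 := fun z hz =>
      hinj (by rw [hz, Matrix.mulVec_zero])
    have hsetEq : {t : ℝ | ∃ ζ : ℂ, ζ ≠ 0 ∧ ∃ ξ : Fin n → ℂ, ξ ≠ 0 ∧
          t = |Paper.HFA (Paper.Fpow p) (Paper.cplx 0 V) ζ ξ| /
              Paper.HFA (Paper.Fpow p) (Paper.cplx U 0) ζ ξ}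
        = {t : ℝ | ∃ u v : Fin n → ℝ, ¬(u = 0 ∧ v = 0) ∧
            t = 2 * |Paper.rdot u ((S⁻¹ * Paper.Vmap p V * S⁻¹).mulVec v)|
              / (Paper.rdot u u + Paper.rdot v v)} := by
      ext t
      simp only [Set.mem_setOf_eq]
      constructor
      · rintro ⟨ζ, hζ, ξ, hξ, rfl⟩
        refine ⟨Real.sqrt (p-1) • S.mulVec (S7.Xv ζ ξ), S.mulVec (S7.Yv ζ ξ), ?_, ?_⟩
        · rintro ⟨hu0, hv0⟩
          apply S7.XY_ne hζ hξ
          exact ⟨hSmvz _ ((smul_eq_zero.mp hu0).resolve_left hsq), hSmvz _ hv0⟩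
        · exact S7.quotient_formula hp V hSt hdet hSS hζ ξ
      · rintro ⟨u, v, huv, rfl⟩
        set x : Fin n → ℝ := (Real.sqrt (p-1))⁻¹ • S⁻¹.mulVec u with hx
        set y : Fin n → ℝ := S⁻¹.mulVec v with hy
        set ξ : Fin n → ℂ := fun j => (x j : ℂ) + (y j : ℂ) * Complex.I with hxi
        have hXv : S7.Xv 1 ξ = x := funext fun j => by simp [S7.Xv, hxi]
        have hYv : S7.Yv 1 ξ = y := funext fun j => by simp [S7.Yv, hxi]
        have hu' : Real.sqrt (p-1) • S.mulVec x = u := by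
          rw [hx, Matrix.mulVec_smul, Matrix.mulVec_mulVec, Matrix.mul_nonsing_inv S hdet,
            Matrix.one_mulVec, smul_smul, mul_inv_cancel₀ hsq, one_smul]
        have hv' : S.mulVec y = v := by
          rw [hy, Matrix.mulVec_mulVec, Matrix.mul_nonsing_inv S hdet, Matrix.one_mulVec]
        have hξ : ξ ≠ 0 := by
          intro h
          have hx0 : x = 0 := funext fun j => by
            have h2 := congrFun h j
            rw [hxi] at h2
            simpa using congrArg Complex.re h2
          have hy0 : y = 0 := funext fun j => by
            have h2 := congrFun h j
            rw [hxi] at h2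
            simpa using congrArg Complex.im h2
          apply huv
          constructor
          · rw [← hu', hx0, Matrix.mulVec_zero, smul_zero]
          · rw [← hv', hy0, Matrix.mulVec_zero]
        refine ⟨1, one_ne_zero, ξ, hξ, ?_⟩
        rw [S7.quotient_formula hp V hSt hdet hSS one_ne_zero ξ, hXv, hYv, hu', hv']
    rw [hsetEq]
    exact S7.sup_lemma _
end
end
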